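/- arXiv:1405.2946 — 6 statements merged into one kernel-verified Lean document; each statement's English description precedes it below -/
import Mathlib

section
/- Let μ : [0,∞) → [1,∞) be a continuous growth rate, ε ≥ 0 and a,b > 0. On X = ℝ² with the norm ‖(x₁,x₂)‖ = max{|x₁|,|x₂|}, define P(t)(x₁,x₂) = (x₁ + (μ(t)^ε − 1)x₂, 0), Q(t) = Id − P(t), and U(t,s) = (μ(t)/μ(s))^{−a} P(s) + (μ(t)/μ(s))^{b} Q(t) for t ≥ s ≥ 0. Then U is an evolution operator, P is a projection valued function compatible with U, and for all t ≥ s ≥ 0: ‖U(t,s)P(s)‖ = (μ(t)/μ(s))^{−a} μ(s)^ε and ‖U_Q(s,t)Q(t)‖ ≤ (μ(t)/μ(s))^{−b} μ(t)^ε; in particular U has a nonuniform μ-dichotomy with projection valued function P (with constants a, b, ε, N₁ = N₂ = 1). -/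
open Real MeasureTheory Filter

noncomputable section

/-- A growth rate: an increasing function `μ : [0,∞) → [1,∞)` with `μ 0 = 1` and
`μ t → ∞` as `t → ∞`. -/
def IsGrowthRate (μ : ℝ → ℝ) : Prop :=
  (∀ t, 0 ≤ t → 1 ≤ μ t) ∧ MonotoneOn μ (Set.Ici 0) ∧ μ 0 = 1 ∧
    Filter.Tendsto μ Filter.atTop Filter.atTop

variable {X : Type*} [NormedAddCommGroup X] [NormedSpace ℝ X]

/-- An evolution operator on `X`. -/
def IsEvolutionOperator (U : ℝ → ℝ → X →L[ℝ] X) : Prop :=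
  (∀ t, 0 ≤ t → U t t = 1) ∧
  (∀ s τ t, 0 ≤ s → s ≤ τ → τ ≤ t → (U t τ).comp (U τ s) = U t s) ∧
  (∀ x : X, ContinuousOn (fun q : ℝ × ℝ => U q.1 q.2 x) {q : ℝ × ℝ | 0 ≤ q.2 ∧ q.2 ≤ q.1})

/-- A (strongly continuous) projection valued function. -/
def IsProjectionValued (P : ℝ → X →L[ℝ] X) : Prop :=
  (∀ t, 0 ≤ t → (P t).comp (P t) = P t) ∧
  (∀ x : X, ContinuousOn (fun t => P t x) (Set.Ici 0))

/-- `P` is compatible with the evolution operator `U`; `V s t` plays the role of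
`U_Q(s,t)`, the inverse of the restriction `U(t,s)|_{Q(s)X} : Q(s)X → Q(t)X`,
where `Q t = 1 - P t`. -/
def CompatibleProjection (U V : ℝ → ℝ → X →L[ℝ] X) (P : ℝ → X →L[ℝ] X) : Prop :=
  (∀ s t, 0 ≤ s → s ≤ t → (P t).comp (U t s) = (U t s).comp (P s)) ∧
  (∀ s t, 0 ≤ s → s ≤ t → ∀ x : X,
    (1 - P s) (V s t ((1 - P t) x)) = V s t ((1 - P t) x)) ∧
  (∀ s t, 0 ≤ s → s ≤ t → ∀ x : X, U t s (V s t ((1 - P t) x)) = (1 - P t) x) ∧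
  (∀ s t, 0 ≤ s → s ≤ t → ∀ x : X, V s t (U t s ((1 - P s) x)) = (1 - P s) x)

/-- Nonuniform μ-dichotomy. -/
def NonuniformMuDichotomy (μ : ℝ → ℝ) (U V : ℝ → ℝ → X →L[ℝ] X)
    (P : ℝ → X →L[ℝ] X) : Prop :=
  ∃ a b ε N₁ N₂ : ℝ, 0 < a ∧ 0 < b ∧ 0 ≤ ε ∧ 1 ≤ N₁ ∧ 1 ≤ N₂ ∧
    ∀ s t, 0 ≤ s → s ≤ t →
      ‖(U t s).comp (P s)‖ ≤ N₁ * (μ t / μ s) ^ (-a) * μ s ^ ε ∧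
      ‖(V s t).comp (1 - P t)‖ ≤ N₂ * (μ t / μ s) ^ (-b) * μ t ^ ε

/-- Uniform μ-dichotomy (the case ε = 0). -/
def UniformMuDichotomy (μ : ℝ → ℝ) (U V : ℝ → ℝ → X →L[ℝ] X)
    (P : ℝ → X →L[ℝ] X) : Prop :=
  ∃ a b N₁ N₂ : ℝ, 0 < a ∧ 0 < b ∧ 1 ≤ N₁ ∧ 1 ≤ N₂ ∧
    ∀ s t, 0 ≤ s → s ≤ t →
      ‖(U t s).comp (P s)‖ ≤ N₁ * (μ t / μ s) ^ (-a) ∧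
      ‖(V s t).comp (1 - P t)‖ ≤ N₂ * (μ t / μ s) ^ (-b)

/-- The Green function associated to `U` and `P`:
`G(t,s) = U(t,s)P(s)` for `t > s` and `G(t,s) = -U_Q(t,s)Q(s)` for `t < s`. -/
def greenFunction (U V : ℝ → ℝ → X →L[ℝ] X) (P : ℝ → X →L[ℝ] X) (t s : ℝ) :
    X →L[ℝ] X :=
  if s < t then (U t s).comp (P s)
  else if t < s then -((V t s).comp (1 - P s))
  else 0

/-- Membership in the class `H^μ_{γ,p}(P)`. -/
def MemHClass (μ : ℝ → ℝ) (P : ℝ → X →L[ℝ] X) (γ p : ℝ) (H : ℝ → X →L[ℝ] X) : Prop :=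
  (∀ x : X, ContinuousOn (fun t => H t x) (Set.Ici 0)) ∧
  (∀ t, 0 ≤ t → ∀ x : X,
    ‖H t x‖ ≤ (deriv μ t / μ t) ^ (1 / p) * μ t ^ γ * ‖P t x‖ +
      (deriv μ t / μ t) ^ (1 / p) * μ t ^ (-γ) * ‖(1 - P t) x‖)

/-- Example 2.8 (first part): on `ℝ²` with the sup norm, with
`P(t)(x₁,x₂) = (x₁ + (μ(t)^ε − 1)x₂, 0)` and
`U(t,s) = (μ(t)/μ(s))^{-a} P(s) + (μ(t)/μ(s))^{b} Q(t)`, the map `U` is an evolution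
operator, `P` is a projection valued function compatible with `U`,
`‖U(t,s)P(s)‖ = (μ(t)/μ(s))^{-a} μ(s)^ε`, `‖U_Q(s,t)Q(t)‖ ≤ (μ(t)/μ(s))^{-b} μ(t)^ε`,
and `U` has a nonuniform μ-dichotomy with projection valued function `P`. -/
theorem example_nonuniform_mu_dichotomy
    (μ : ℝ → ℝ) (hgr : IsGrowthRate μ) (hcont : ContinuousOn μ (Set.Ici 0))
    (ε a b : ℝ) (hε : 0 ≤ ε) (ha : 0 < a) (hb : 0 < b)
    (P : ℝ → (ℝ × ℝ) →L[ℝ] (ℝ × ℝ)) (U : ℝ → ℝ → (ℝ × ℝ) →L[ℝ] (ℝ × ℝ))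
    (hPdef : ∀ t, 0 ≤ t → ∀ x : ℝ × ℝ, P t x = (x.1 + (μ t ^ ε - 1) * x.2, 0))
    (hUdef : ∀ s t, 0 ≤ s → s ≤ t → ∀ x : ℝ × ℝ,
      U t s x = (μ t / μ s) ^ (-a) • P s x + (μ t / μ s) ^ b • (1 - P t) x) :
    IsEvolutionOperator U ∧ IsProjectionValued P ∧
      ∃ V : ℝ → ℝ → (ℝ × ℝ) →L[ℝ] (ℝ × ℝ), CompatibleProjection U V P ∧
        (∀ s t, 0 ≤ s → s ≤ t →
          ‖(U t s).comp (P s)‖ = (μ t / μ s) ^ (-a) * μ s ^ ε ∧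
          ‖(V s t).comp (1 - P t)‖ ≤ (μ t / μ s) ^ (-b) * μ t ^ ε) ∧
        NonuniformMuDichotomy μ U V P := by
  obtain ⟨hμ1, hμmono, hμ0, hμtop⟩ := hgr
  have hμpos : ∀ t, 0 ≤ t → 0 < μ t := fun t ht => lt_of_lt_of_le one_pos (hμ1 t ht)
  have hcε : ∀ t, 0 ≤ t → 1 ≤ μ t ^ ε := fun t ht => Real.one_le_rpow (hμ1 t ht) hε
  have hc0 : ∀ t, 0 ≤ t → 0 ≤ μ t ^ ε - 1 := fun t ht => sub_nonneg.2 (hcε t ht)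
  -- formula for Q
  have hQ : ∀ t, 0 ≤ t → ∀ x : ℝ × ℝ,
      (1 - P t) x = (-((μ t ^ ε - 1) * x.2), x.2) := by
    intro t ht x
    have h1 : (1 - P t) x = x - P t x := by
      simp [ContinuousLinearMap.sub_apply]
    rw [h1, hPdef t ht x]
    have hx : x = (x.1, x.2) := rfl
    rw [hx, Prod.mk_sub_mk]
    simp only [Prod.mk.injEq]
    constructor <;> ring
  -- basic algebraic identities
  have hPP : ∀ s t, 0 ≤ s → 0 ≤ t → ∀ x : ℝ × ℝ, P t (P s x) = P s x := by
    intro s t hs ht x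
    rw [hPdef s hs x, hPdef t ht]
    simp
  have hQP : ∀ s t, 0 ≤ s → 0 ≤ t → ∀ x : ℝ × ℝ, (1 - P t) (P s x) = 0 := by
    intro s t hs ht x
    rw [hPdef s hs x, hQ t ht]
    simp
  have hPQ : ∀ t, 0 ≤ t → ∀ x : ℝ × ℝ, P t ((1 - P t) x) = 0 := by
    intro t ht x
    rw [hQ t ht x, hPdef t ht]
    simp
  have hQQ : ∀ s t, 0 ≤ s → 0 ≤ t → ∀ x : ℝ × ℝ,
      (1 - P t) ((1 - P s) x) = (1 - P t) x := by
    intro s t hs ht x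
    rw [hQ s hs x, hQ t ht, hQ t ht]
  -- strong continuity of P
  have hPcont : ∀ x : ℝ × ℝ, ContinuousOn (fun t => P t x) (Set.Ici 0) := by
    intro x
    apply ContinuousOn.congr
      (f := fun t => ((x.1 + (μ t ^ ε - 1) * x.2, 0) : ℝ × ℝ))
    · apply ContinuousOn.prodMk
      · exact continuousOn_const.add
          (((hcont.rpow_const fun t ht => Or.inr hε).sub continuousOn_const).mul
            continuousOn_const)
      · exact continuousOn_const
    · intro t ht
      exact hPdef t ht x
  -- positivity of the scalars
  have hdivpos : ∀ s t, 0 ≤ s → s ≤ t → 0 < μ t / μ s := fun s t hs hst =>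
    div_pos (hμpos t (hs.trans hst)) (hμpos s hs)
  have hαpos : ∀ s t, 0 ≤ s → s ≤ t → 0 < (μ t / μ s) ^ (-a) := fun s t hs hst =>
    Real.rpow_pos_of_pos (hdivpos s t hs hst) _
  have hβpos : ∀ s t, 0 ≤ s → s ≤ t → 0 < (μ t / μ s) ^ b := fun s t hs hst =>
    Real.rpow_pos_of_pos (hdivpos s t hs hst) _
  have hβ'pos : ∀ s t, 0 ≤ s → s ≤ t → 0 < (μ t / μ s) ^ (-b) := fun s t hs hst =>
    Real.rpow_pos_of_pos (hdivpos s t hs hst) _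
  -- the candidate inverse V
  set V : ℝ → ℝ → (ℝ × ℝ) →L[ℝ] (ℝ × ℝ) :=
    fun s t => ((μ t / μ s) ^ (-b)) • ((1 - P s).comp (1 - P t)) with hVdef
  have hVapp : ∀ s t (x : ℝ × ℝ), V s t x = (μ t / μ s) ^ (-b) • (1 - P s) ((1 - P t) x) := by
    intro s t x
    rw [hVdef]
    simp only [ContinuousLinearMap.smul_apply, ContinuousLinearMap.comp_apply]
  -- key computation: U ∘ P
  have hUP : ∀ s t, 0 ≤ s → s ≤ t → ∀ x : ℝ × ℝ,
      U t s (P s x) = (μ t / μ s) ^ (-a) • P s x := by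
    intro s t hs hst x
    rw [hUdef s t hs hst (P s x), hPP s s hs hs x, hQP s t hs (hs.trans hst) x]
    simp
  -- key computation: U ∘ Q s
  have hUQ : ∀ s t, 0 ≤ s → s ≤ t → ∀ x : ℝ × ℝ,
      U t s ((1 - P s) x) = (μ t / μ s) ^ b • (1 - P t) x := by
    intro s t hs hst x
    rw [hUdef s t hs hst ((1 - P s) x)]
    have h1 : P s ((1 - P s) x) = 0 := hPQ s hs x
    have h2 : (1 - P t) ((1 - P s) x) = (1 - P t) x := hQQ s t hs (hs.trans hst) x
    rw [h1, h2]
    simp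
  -- V maps Q t x correctly
  have hVQ : ∀ s t, 0 ≤ s → s ≤ t → ∀ x : ℝ × ℝ,
      V s t ((1 - P t) x) = (μ t / μ s) ^ (-b) • (1 - P s) x := by
    intro s t hs hst x
    rw [hVapp, hQQ t t (hs.trans hst) (hs.trans hst) x,
      hQQ t s (hs.trans hst) hs x]
  -- scalar multiplication combine
  have hrmul : ∀ s τ t : ℝ, 0 ≤ s → s ≤ τ → τ ≤ t → ∀ p : ℝ,
      (μ t / μ τ) ^ p * (μ τ / μ s) ^ p = (μ t / μ s) ^ p := by
    intro s τ t hs hsτ hτt p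
    rw [← Real.mul_rpow (hdivpos τ t (hs.trans hsτ) hτt).le (hdivpos s τ hs hsτ).le]
    congr 1
    rw [div_mul_div_comm, mul_comm (μ t) (μ τ),
      mul_div_mul_left _ _ (hμpos τ (hs.trans hsτ)).ne']
  -- norm of a pair
  have hnorm : ∀ y z : ℝ, ‖((y, z) : ℝ × ℝ)‖ = max |y| |z| := by
    intro y z
    simp [Prod.norm_def, Real.norm_eq_abs]
  -- Evolution operator
  have hEvol : IsEvolutionOperator U := by
    refine ⟨?_, ?_, ?_⟩
    · intro t ht
      refine ContinuousLinearMap.ext fun x => ?_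
      rw [hUdef t t ht le_rfl x, div_self (hμpos t ht).ne', Real.one_rpow,
        Real.one_rpow, one_smul, one_smul]
      simp [ContinuousLinearMap.sub_apply]
    · intro s τ t hs hsτ hτt
      refine ContinuousLinearMap.ext fun x => ?_
      have e1 : U t τ (P s x) = (μ t / μ τ) ^ (-a) • P s x := by
        have h := hUP τ t (hs.trans hsτ) hτt (P s x)
        rwa [hPP s τ hs (hs.trans hsτ) x] at h
      have e2 : U t τ ((1 - P τ) x) = (μ t / μ τ) ^ b • (1 - P t) x :=
        hUQ τ t (hs.trans hsτ) hτt x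
      rw [ContinuousLinearMap.comp_apply, hUdef s τ hs hsτ x]
      rw [map_add, _root_.map_smul, _root_.map_smul, e1, e2,
        hUdef s t hs (hsτ.trans hτt) x, smul_smul, smul_smul]
      congr 2
      · rw [mul_comm]; exact hrmul s τ t hs hsτ hτt (-a)
      · rw [mul_comm]; exact hrmul s τ t hs hsτ hτt b
    · intro x
      apply ContinuousOn.congr
        (f := fun q : ℝ × ℝ => (μ q.1 / μ q.2) ^ (-a) • P q.2 x +
          (μ q.1 / μ q.2) ^ b • (x - P q.1 x))
      · have hc1 : ContinuousOn (fun q : ℝ × ℝ => μ q.1)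
            {q : ℝ × ℝ | 0 ≤ q.2 ∧ q.2 ≤ q.1} :=
          hcont.comp continuous_fst.continuousOn fun q hq => hq.1.trans hq.2
        have hc2 : ContinuousOn (fun q : ℝ × ℝ => μ q.2)
            {q : ℝ × ℝ | 0 ≤ q.2 ∧ q.2 ≤ q.1} :=
          hcont.comp continuous_snd.continuousOn fun q hq => hq.1
        have hcd : ContinuousOn (fun q : ℝ × ℝ => μ q.1 / μ q.2)
            {q : ℝ × ℝ | 0 ≤ q.2 ∧ q.2 ≤ q.1} :=
          hc1.div hc2 fun q hq => (hμpos q.2 hq.1).ne'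
        have hne : ∀ q ∈ {q : ℝ × ℝ | 0 ≤ q.2 ∧ q.2 ≤ q.1},
            μ q.1 / μ q.2 ≠ 0 := fun q hq =>
          (div_pos (hμpos q.1 (hq.1.trans hq.2)) (hμpos q.2 hq.1)).ne'
        have hP2 : ContinuousOn (fun q : ℝ × ℝ => P q.2 x)
            {q : ℝ × ℝ | 0 ≤ q.2 ∧ q.2 ≤ q.1} :=
          (hPcont x).comp continuous_snd.continuousOn fun q hq => hq.1
        have hP1 : ContinuousOn (fun q : ℝ × ℝ => P q.1 x)
            {q : ℝ × ℝ | 0 ≤ q.2 ∧ q.2 ≤ q.1} :=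
          (hPcont x).comp continuous_fst.continuousOn fun q hq => hq.1.trans hq.2
        exact ((hcd.rpow_const fun q hq => Or.inl (hne q hq)).smul hP2).add
          ((hcd.rpow_const fun q hq => Or.inl (hne q hq)).smul
            (continuousOn_const.sub hP1))
      · intro q hq
        show U q.1 q.2 x = (μ q.1 / μ q.2) ^ (-a) • P q.2 x +
          (μ q.1 / μ q.2) ^ b • (x - P q.1 x)
        rw [hUdef q.2 q.1 hq.1 hq.2 x]
        simp [ContinuousLinearMap.sub_apply]
  -- Projection valued
  have hProj : IsProjectionValued P := by
    refine ⟨?_, hPcont⟩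
    intro t ht
    exact ContinuousLinearMap.ext fun x => hPP t t ht ht x
  have hEst : ∀ s t, 0 ≤ s → s ≤ t →
      ‖(U t s).comp (P s)‖ = (μ t / μ s) ^ (-a) * μ s ^ ε ∧
      ‖(V s t).comp (1 - P t)‖ ≤ (μ t / μ s) ^ (-b) * μ t ^ ε := by
    intro s t hs hst
    have ht0 : 0 ≤ t := hs.trans hst
    have hUPx : ∀ x : ℝ × ℝ, (U t s).comp (P s) x =
        (((μ t / μ s) ^ (-a) * (x.1 + (μ s ^ ε - 1) * x.2), 0) : ℝ × ℝ) := by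
      intro x
      rw [ContinuousLinearMap.comp_apply, hUP s t hs hst x, hPdef s hs x]
      simp [Prod.smul_mk, smul_eq_mul]
    have hVQx : ∀ x : ℝ × ℝ, (V s t).comp (1 - P t) x =
        (((μ t / μ s) ^ (-b) * (-((μ s ^ ε - 1) * x.2)),
          (μ t / μ s) ^ (-b) * x.2) : ℝ × ℝ) := by
      intro x
      rw [ContinuousLinearMap.comp_apply, hVQ s t hs hst x, hQ s hs x]
      simp [Prod.smul_mk, smul_eq_mul]
    constructor
    · -- equality of norms
      apply le_antisymm
      · apply ContinuousLinearMap.opNorm_le_bound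
        · exact mul_nonneg (hαpos s t hs hst).le (Real.rpow_nonneg (hμpos s hs).le ε)
        · intro x
          rw [hUPx x, hnorm, abs_zero]
          rw [max_eq_left (abs_nonneg _)]
          rw [abs_mul, abs_of_pos (hαpos s t hs hst)]
          have h1 : |x.1 + (μ s ^ ε - 1) * x.2| ≤ μ s ^ ε * ‖x‖ := by
            have hx1 : |x.1| ≤ ‖x‖ := by
              simpa [Real.norm_eq_abs] using norm_fst_le x
            have hx2 : |x.2| ≤ ‖x‖ := by
              simpa [Real.norm_eq_abs] using norm_snd_le x
            calc |x.1 + (μ s ^ ε - 1) * x.2| ≤ |x.1| + |(μ s ^ ε - 1) * x.2| :=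
                abs_add_le _ _
              _ = |x.1| + (μ s ^ ε - 1) * |x.2| := by
                rw [abs_mul, abs_of_nonneg (hc0 s hs)]
              _ ≤ ‖x‖ + (μ s ^ ε - 1) * ‖x‖ := by
                have := mul_le_mul_of_nonneg_left hx2 (hc0 s hs)
                linarith
              _ = μ s ^ ε * ‖x‖ := by ring
          calc (μ t / μ s) ^ (-a) * |x.1 + (μ s ^ ε - 1) * x.2|
              ≤ (μ t / μ s) ^ (-a) * (μ s ^ ε * ‖x‖) :=
                mul_le_mul_of_nonneg_left h1 (hαpos s t hs hst).le
            _ = (μ t / μ s) ^ (-a) * μ s ^ ε * ‖x‖ := by ring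
      · have h11 : ‖((1, 1) : ℝ × ℝ)‖ = 1 := by
          rw [show ((1,1) : ℝ × ℝ) = ((1 : ℝ), (1 : ℝ)) from rfl, hnorm]
          simp
        have hle := ((U t s).comp (P s)).le_opNorm ((1, 1) : ℝ × ℝ)
        rw [h11, mul_one, hUPx ((1,1) : ℝ × ℝ), hnorm, abs_zero] at hle
        have : |(μ t / μ s) ^ (-a) * ((1:ℝ) + (μ s ^ ε - 1) * 1)| =
            (μ t / μ s) ^ (-a) * μ s ^ ε := by
          rw [abs_of_nonneg]
          · ring
          · have := hc0 s hs
            have := (hαpos s t hs hst).le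
            nlinarith
        rw [max_eq_left (abs_nonneg _)] at hle
        simpa [abs_mul, abs_of_pos (hαpos s t hs hst),
          abs_of_nonneg (Real.rpow_nonneg (hμpos s hs).le ε)] using hle
    · -- inequality for V
      apply ContinuousLinearMap.opNorm_le_bound
      · exact mul_nonneg (hβ'pos s t hs hst).le (Real.rpow_nonneg (hμpos t ht0).le ε)
      · intro x
        rw [hVQx x, hnorm]
        have hx2 : |x.2| ≤ ‖x‖ := by
          simpa [Real.norm_eq_abs] using norm_snd_le x
        have hsε : μ s ^ ε ≤ μ t ^ ε :=
          Real.rpow_le_rpow (hμpos s hs).le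
            (hμmono (Set.mem_Ici.2 hs) (Set.mem_Ici.2 ht0) hst) hε
        have hb' := (hβ'pos s t hs hst).le
        apply max_le
        · rw [abs_mul, abs_of_nonneg hb', abs_neg, abs_mul,
            abs_of_nonneg (hc0 s hs)]
          have h1 : (μ s ^ ε - 1) * |x.2| ≤ μ t ^ ε * ‖x‖ := by
            have h2 : μ s ^ ε - 1 ≤ μ t ^ ε := by linarith
            have := abs_nonneg x.2
            nlinarith [hc0 s hs, norm_nonneg x]
          nlinarith
        · rw [abs_mul, abs_of_nonneg hb']
          have h1 : (1:ℝ) ≤ μ t ^ ε := hcε t ht0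
          calc (μ t / μ s) ^ (-b) * |x.2|
              ≤ (μ t / μ s) ^ (-b) * ‖x‖ := mul_le_mul_of_nonneg_left hx2 hb'
            _ ≤ (μ t / μ s) ^ (-b) * (μ t ^ ε * ‖x‖) :=
                mul_le_mul_of_nonneg_left
                  (by nlinarith [norm_nonneg x]) hb'
            _ = (μ t / μ s) ^ (-b) * μ t ^ ε * ‖x‖ := by ring
  refine ⟨hEvol, hProj, V, ?_, hEst, ?_⟩
  · -- CompatibleProjection
    refine ⟨?_, ?_, ?_, ?_⟩
    · intro s t hs hst
      refine ContinuousLinearMap.ext fun x => ?_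
      rw [ContinuousLinearMap.comp_apply, ContinuousLinearMap.comp_apply,
        hUdef s t hs hst x, hUP s t hs hst x, map_add, _root_.map_smul, _root_.map_smul,
        hPP s t hs (hs.trans hst) x, hPQ t (hs.trans hst) x]
      simp
    · intro s t hs hst x
      rw [hVQ s t hs hst x, _root_.map_smul, hQQ s s hs hs x]
    · intro s t hs hst x
      rw [hVQ s t hs hst x, _root_.map_smul, hUQ s t hs hst x, smul_smul,
        ← Real.rpow_add (hdivpos s t hs hst), neg_add_cancel, Real.rpow_zero, one_smul]
    · intro s t hs hst x
      rw [hUQ s t hs hst x, _root_.map_smul, hVQ s t hs hst x, smul_smul,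
        ← Real.rpow_add (hdivpos s t hs hst), add_neg_cancel, Real.rpow_zero, one_smul]
  · -- dichotomy
    refine ⟨a, b, ε, 1, 1, ha, hb, hε, le_refl 1, le_refl 1, ?_⟩
    intro s t hs hst
    constructor
    · rw [(hEst s t hs hst).1, one_mul]
    · simpa [one_mul] using (hEst s t hs hst).2
end
end

section
/- Let μ : [0,∞) → [1,∞) be a continuous growth rate, ε > 0 and a,b > 0. On X = ℝ² with the norm ‖(x₁,x₂)‖ = max{|x₁|,|x₂|}, define P(t)(x₁,x₂) = (x₁ + (μ(t)^ε − 1)x₂, 0), Q(t) = Id − P(t), and U(t,s) = (μ(t)/μ(s))^{−a} P(s) + (μ(t)/μ(s))^{b} Q(t) for t ≥ s ≥ 0. Then there exist no constants ν > 0 and N ≥ 1 such that ‖U(t,s)P(s)‖ ≤ N (μ(t)/μ(s))^{−ν} for all t ≥ s ≥ 0; in particular U does not have a uniform μ-dichotomy with projection valued function P. -/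
open Real MeasureTheory Filter

noncomputable section

variable {X : Type*} [NormedAddCommGroup X] [NormedSpace ℝ X]

/-- Example 2.8 (second part): with `ε > 0`, the evolution operator
`U(t,s) = (μ(t)/μ(s))^{-a} P(s) + (μ(t)/μ(s))^{b} Q(t)` admits no constants `ν > 0`,
`N ≥ 1` with `‖U(t,s)P(s)‖ ≤ N (μ(t)/μ(s))^{-ν}` for all `t ≥ s ≥ 0`; in particular
`U` does not have a uniform μ-dichotomy with projection valued function `P`. -/
theorem example_not_uniform_mu_dichotomy
    (μ : ℝ → ℝ) (hgr : IsGrowthRate μ)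
    (ε a b : ℝ) (hε : 0 < ε) (ha : 0 < a) (hb : 0 < b)
    (P : ℝ → (ℝ × ℝ) →L[ℝ] (ℝ × ℝ)) (U : ℝ → ℝ → (ℝ × ℝ) →L[ℝ] (ℝ × ℝ))
    (hPdef : ∀ t, 0 ≤ t → ∀ x : ℝ × ℝ, P t x = (x.1 + (μ t ^ ε - 1) * x.2, 0))
    (hUdef : ∀ s t, 0 ≤ s → s ≤ t → ∀ x : ℝ × ℝ,
      U t s x = (μ t / μ s) ^ (-a) • P s x + (μ t / μ s) ^ b • (1 - P t) x) :
    (¬ ∃ ν N : ℝ, 0 < ν ∧ 1 ≤ N ∧ ∀ s t, 0 ≤ s → s ≤ t →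
        ‖(U t s).comp (P s)‖ ≤ N * (μ t / μ s) ^ (-ν)) ∧
    (∀ V : ℝ → ℝ → (ℝ × ℝ) →L[ℝ] (ℝ × ℝ), CompatibleProjection U V P →
        ¬ UniformMuDichotomy μ U V P) := by
  obtain ⟨h1, hmono, h0, htend⟩ := hgr
  have hmain : ¬ ∃ ν N : ℝ, 0 < ν ∧ 1 ≤ N ∧ ∀ s t, 0 ≤ s → s ≤ t →
      ‖(U t s).comp (P s)‖ ≤ N * (μ t / μ s) ^ (-ν) := by
    rintro ⟨ν, N, hν, hN, hbound⟩
    obtain ⟨t₀, ht₀⟩ := (Filter.tendsto_atTop.mp htend ((N + 2) ^ (1 / ε))).exists_forall_of_atTop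
    set t := max t₀ 0 with htdef
    have ht : (0:ℝ) ≤ t := le_max_right _ _
    have hμ : (N + 2) ^ (1 / ε) ≤ μ t := ht₀ t (le_max_left _ _)
    have hμ1 : (1:ℝ) ≤ μ t := h1 t ht
    have hμpos : (0:ℝ) < μ t := lt_of_lt_of_le one_pos hμ1
    have hμε : (1:ℝ) ≤ μ t ^ ε := Real.one_le_rpow hμ1 hε.le
    -- μ t ^ ε ≥ N + 2
    have hN2 : (0:ℝ) ≤ N + 2 := by linarith
    have hge : N + 2 ≤ μ t ^ ε := by
      calc N + 2 = ((N + 2) ^ (1 / ε)) ^ ε := by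
            rw [← Real.rpow_mul hN2, one_div_mul_cancel hε.ne', Real.rpow_one]
        _ ≤ μ t ^ ε := Real.rpow_le_rpow (Real.rpow_nonneg hN2 _) hμ hε.le
    -- compute (U t t).comp (P t) applied to (0,1)
    have hPt : P t ((0:ℝ), (1:ℝ)) = (μ t ^ ε - 1, 0) := by
      rw [hPdef t ht]; norm_num
    have hPt2 : P t ((μ t ^ ε - 1 : ℝ), (0:ℝ)) = (μ t ^ ε - 1, 0) := by
      rw [hPdef t ht]; norm_num
    have hone : μ t / μ t = 1 := div_self hμpos.ne'
    have hU : U t t ((μ t ^ ε - 1 : ℝ), (0:ℝ)) = (μ t ^ ε - 1, 0) := by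
      rw [hUdef t t ht le_rfl, hone, Real.one_rpow, Real.one_rpow, one_smul, one_smul]
      simp [ContinuousLinearMap.sub_apply, hPt2]
    have happ : ((U t t).comp (P t)) ((0:ℝ), (1:ℝ)) = (μ t ^ ε - 1, 0) := by
      rw [ContinuousLinearMap.comp_apply, hPt, hU]
    have hxnorm : ‖((0:ℝ), (1:ℝ))‖ = 1 := by
      rw [Prod.norm_def]; norm_num
    have hnormval : ‖((μ t ^ ε - 1 : ℝ), (0:ℝ))‖ = μ t ^ ε - 1 := by
      rw [Prod.norm_def]
      simp [Real.norm_eq_abs, abs_of_nonneg (by linarith : (0:ℝ) ≤ μ t ^ ε - 1)]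
      linarith
    have hle : μ t ^ ε - 1 ≤ ‖(U t t).comp (P t)‖ := by
      have := ContinuousLinearMap.le_opNorm ((U t t).comp (P t)) ((0:ℝ), (1:ℝ))
      rw [happ, hxnorm, hnormval, mul_one] at this
      exact this
    have hb1 := hbound t t ht le_rfl
    rw [hone, Real.one_rpow, mul_one] at hb1
    linarith
  refine ⟨hmain, ?_⟩
  intro V _ hud
  obtain ⟨a', b', N₁, N₂, ha', hb', hN₁, hN₂, h⟩ := hud
  exact hmain ⟨a', N₁, ha', hN₁, fun s t hs hst => (h s t hs hst).1⟩
end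
end

section
/- Let p > 0 and let μ : [0,∞) → [1,∞) be a differentiable growth rate. If the evolution operator U : Δ → B(X) has a nonuniform μ-dichotomy with projection valued function P (with constants a,b > 0, ε ≥ 0, N₁,N₂ ≥ 1), then for every 0 < γ < min{a,b} and every t ≥ 0, x ∈ X: ∫₀^{+∞} (μ'(τ)/μ(τ)) (μ(τ)/μ(t))^{pγ·sign(τ−t)} ‖G(τ,t)x‖^p dτ ≤ D μ(t)^{pε} ‖x‖^p, where D = N₁^p/(p(a−γ)) + N₂^p/(p(b−γ)). -/
open Real MeasureTheory Filter

noncomputable section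

variable {X : Type*} [NormedAddCommGroup X] [NormedSpace ℝ X]

lemma aux_deriv_nonneg {μ : ℝ → ℝ} (hm : MonotoneOn μ (Set.Ici 0)) {τ : ℝ}
    (hτ : 0 < τ) (hd : DifferentiableAt ℝ μ τ) : 0 ≤ deriv μ τ := by
  have h1 : HasDerivWithinAt μ (deriv μ τ) (Set.Ioi τ) τ :=
    hd.hasDerivAt.hasDerivWithinAt
  have h2 := hasDerivWithinAt_iff_tendsto_slope.1 h1
  have hset : Set.Ioi τ \ {τ} = Set.Ioi τ := by
    ext y; simp only [Set.mem_diff, Set.mem_Ioi, Set.mem_singleton_iff, and_iff_left_iff_imp]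
    intro hy; exact ne_of_gt hy
  rw [hset] at h2
  refine ge_of_tendsto h2 ?_
  filter_upwards [self_mem_nhdsWithin] with y hy
  have hy' : τ < y := hy
  rw [slope_def_field]
  exact div_nonneg (sub_nonneg.2 (hm (le_of_lt hτ) (le_of_lt (hτ.trans hy'))
    hy'.le)) (sub_pos.2 hy').le

lemma aux_lintegral_Ioo_ofReal_deriv_le {g g' : ℝ → ℝ} {a b : ℝ} (hab : a ≤ b)
    (hcont : ContinuousOn g (Set.Icc a b))
    (hderiv : ∀ x ∈ Set.Ioo a b, HasDerivAt g (g' x) x)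
    (g'pos : ∀ x ∈ Set.Ioo a b, 0 ≤ g' x) :
    ∫⁻ x in Set.Ioo a b, ENNReal.ofReal (g' x) ≤ ENNReal.ofReal (g b - g a) := by
  have hint : IntegrableOn g' (Set.Ioc a b) :=
    intervalIntegral.integrableOn_deriv_of_nonneg hcont hderiv g'pos
  have hint' : IntegrableOn g' (Set.Ioo a b) := hint.mono_set Set.Ioo_subset_Ioc_self
  have heq : ∫⁻ x in Set.Ioo a b, ENNReal.ofReal (g' x) =
      ENNReal.ofReal (∫ x in Set.Ioo a b, g' x) :=
    (ofReal_integral_eq_lintegral_ofReal hint'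
      ((ae_restrict_mem measurableSet_Ioo).mono g'pos)).symm
  rw [heq]
  apply ENNReal.ofReal_le_ofReal
  rw [← integral_Ioc_eq_integral_Ioo, ← intervalIntegral.integral_of_le hab]
  exact intervalIntegral.integral_le_sub_of_hasDeriv_right_of_le hab hcont
    (fun x hx => (hderiv x hx).hasDerivWithinAt)
    ((integrableOn_Icc_iff_integrableOn_Ioc).2 hint) (fun x _ => le_rfl)

lemma aux_piece (μ : ℝ → ℝ) (hμ1 : ∀ s, 0 ≤ s → 1 ≤ μ s)
    (hmono : MonotoneOn μ (Set.Ici 0))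
    (hdiff : ∀ s, 0 ≤ s → DifferentiableAt ℝ μ s)
    {e : ℝ} (he : e ≠ 0) {t u v : ℝ} (ht : 0 ≤ t) (hu : 0 ≤ u) (huv : u ≤ v) :
    ∫⁻ τ in Set.Ioo u v, ENNReal.ofReal (deriv μ τ / μ τ * (μ τ / μ t) ^ e)
      ≤ ENNReal.ofReal (μ v ^ e / (e * μ t ^ e) - μ u ^ e / (e * μ t ^ e)) := by
  have hpos : ∀ s, 0 ≤ s → 0 < μ s := fun s hs => lt_of_lt_of_le one_pos (hμ1 s hs)
  have hμt : 0 < μ t := hpos t ht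
  have hμte : 0 < μ t ^ e := Real.rpow_pos_of_pos hμt e
  have hD : ∀ τ, u ≤ τ → HasDerivAt (fun s => μ s ^ e / (e * μ t ^ e))
      ((e * μ τ ^ (e - 1) * deriv μ τ) / (e * μ t ^ e)) τ := by
    intro τ hτ
    have h0 : (0:ℝ) ≤ τ := le_trans hu hτ
    have hμτ : 0 < μ τ := hpos τ h0
    exact ((Real.hasDerivAt_rpow_const (p := e) (Or.inl hμτ.ne')).comp τ
      (hdiff τ h0).hasDerivAt).div_const (e * μ t ^ e)
  have hDeq : ∀ τ ∈ Set.Ioo u v, HasDerivAt (fun s => μ s ^ e / (e * μ t ^ e))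
      (deriv μ τ / μ τ * (μ τ / μ t) ^ e) τ := by
    intro τ hτ
    have h0 : (0:ℝ) ≤ τ := le_trans hu hτ.1.le
    have hμτ : 0 < μ τ := hpos τ h0
    convert hD τ hτ.1.le using 1
    rw [Real.div_rpow hμτ.le hμt.le, Real.rpow_sub hμτ, Real.rpow_one]
    field_simp
  apply aux_lintegral_Ioo_ofReal_deriv_le huv
  · intro τ hτ
    exact ((hD τ hτ.1).continuousAt).continuousWithinAt
  · exact hDeq
  · intro τ hτ
    have h0 : (0:ℝ) < τ := lt_of_le_of_lt hu hτ.1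
    have hμτ : 0 < μ τ := hpos τ h0.le
    exact mul_nonneg (div_nonneg (aux_deriv_nonneg hmono h0 (hdiff τ h0.le)) hμτ.le)
      (Real.rpow_nonneg (div_nonneg hμτ.le hμt.le) e)

lemma aux_div_rpow_neg {x y : ℝ} (hx : 0 ≤ x) (hy : 0 ≤ y) (r : ℝ) :
    (x / y) ^ (-r) = (y / x) ^ r := by
  rw [Real.rpow_neg (div_nonneg hx hy), ← Real.inv_rpow (div_nonneg hx hy), inv_div]

/-- Theorem 3.1: if `U` has a nonuniform μ-dichotomy with projection valued function `P`
(with constants `a, b, ε, N₁, N₂`), then for every `0 < γ < min{a,b}`, `t ≥ 0`, `x ∈ X`: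
`∫₀^∞ (μ'(τ)/μ(τ)) (μ(τ)/μ(t))^{pγ sign(τ-t)} ‖G(τ,t)x‖^p dτ ≤ D μ(t)^{pε} ‖x‖^p`,
where `D = N₁^p/(p(a-γ)) + N₂^p/(p(b-γ))`. -/
theorem dichotomy_implies_integral_estimate
    {X : Type*} [NormedAddCommGroup X] [NormedSpace ℝ X] [CompleteSpace X]
    (μ : ℝ → ℝ) (hgr : IsGrowthRate μ)
    (hdiff : ∀ t, 0 ≤ t → DifferentiableAt ℝ μ t)
    (p : ℝ) (hp : 0 < p)
    (U V : ℝ → ℝ → X →L[ℝ] X) (P : ℝ → X →L[ℝ] X)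
    (hU : IsEvolutionOperator U) (hP : IsProjectionValued P)
    (hC : CompatibleProjection U V P)
    (a b ε N₁ N₂ : ℝ) (ha : 0 < a) (hb : 0 < b) (hε : 0 ≤ ε)
    (hN₁ : 1 ≤ N₁) (hN₂ : 1 ≤ N₂)
    (hdich₁ : ∀ s t, 0 ≤ s → s ≤ t →
      ‖(U t s).comp (P s)‖ ≤ N₁ * (μ t / μ s) ^ (-a) * μ s ^ ε)
    (hdich₂ : ∀ s t, 0 ≤ s → s ≤ t →
      ‖(V s t).comp (1 - P t)‖ ≤ N₂ * (μ t / μ s) ^ (-b) * μ t ^ ε)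
    (γ : ℝ) (hγ0 : 0 < γ) (hγ : γ < min a b) (t : ℝ) (ht : 0 ≤ t) (x : X) :
    ∫⁻ τ in Set.Ioi (0 : ℝ), ENNReal.ofReal
        (deriv μ τ / μ τ * (μ τ / μ t) ^ (p * γ * Real.sign (τ - t)) *
          ‖greenFunction U V P τ t x‖ ^ p)
      ≤ ENNReal.ofReal ((N₁ ^ p / (p * (a - γ)) + N₂ ^ p / (p * (b - γ))) *
          μ t ^ (p * ε) * ‖x‖ ^ p) := by
  
  classical
  have hμ1 : ∀ s, 0 ≤ s → 1 ≤ μ s := hgr.1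
  have hmono := hgr.2.1
  have hpos : ∀ s, 0 ≤ s → 0 < μ s := fun s hs => lt_of_lt_of_le one_pos (hμ1 s hs)
  have hμt : 0 < μ t := hpos t ht
  have hγa : γ < a := lt_of_lt_of_le hγ (min_le_left a b)
  have hγb : γ < b := lt_of_lt_of_le hγ (min_le_right a b)
  set c₁ : ℝ := p * (a - γ) with hc₁def
  set c₂ : ℝ := p * (b - γ) with hc₂def
  have hc₁ : 0 < c₁ := mul_pos hp (sub_pos.2 hγa)
  have hc₂ : 0 < c₂ := mul_pos hp (sub_pos.2 hγb)
  set K₁ : ℝ := N₁ ^ p * (μ t ^ (p * ε) * ‖x‖ ^ p) with hK₁def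
  set K₂ : ℝ := N₂ ^ p * (μ t ^ (p * ε) * ‖x‖ ^ p) with hK₂def
  have hN₁0 : (0:ℝ) ≤ N₁ := le_trans zero_le_one hN₁
  have hN₂0 : (0:ℝ) ≤ N₂ := le_trans zero_le_one hN₂
  have hK₁0 : 0 ≤ K₁ := mul_nonneg (Real.rpow_nonneg hN₁0 p)
    (mul_nonneg (Real.rpow_nonneg hμt.le _) (Real.rpow_nonneg (norm_nonneg x) p))
  have hK₂0 : 0 ≤ K₂ := mul_nonneg (Real.rpow_nonneg hN₂0 p)
    (mul_nonneg (Real.rpow_nonneg hμt.le _) (Real.rpow_nonneg (norm_nonneg x) p))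
  have hIoc : ∫⁻ τ in Set.Ioc (0:ℝ) t, ENNReal.ofReal
        (deriv μ τ / μ τ * (μ τ / μ t) ^ (p * γ * Real.sign (τ - t)) *
          ‖greenFunction U V P τ t x‖ ^ p)
      ≤ ENNReal.ofReal (K₂ * (1 / c₂)) := by
    rw [← setLIntegral_congr (Ioo_ae_eq_Ioc (a := (0:ℝ)) (b := t))]
    have hpt : ∀ τ ∈ Set.Ioo (0:ℝ) t,
        deriv μ τ / μ τ * (μ τ / μ t) ^ (p * γ * Real.sign (τ - t)) *
          ‖greenFunction U V P τ t x‖ ^ p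
        ≤ K₂ * (deriv μ τ / μ τ * (μ τ / μ t) ^ c₂) := by
      intro τ hτ
      have hτ0 : (0:ℝ) < τ := hτ.1
      have hτt : τ < t := hτ.2
      have hμτ : 0 < μ τ := hpos τ hτ0.le
      have hX : 0 < μ τ / μ t := div_pos hμτ hμt
      have hY : 0 < μ t / μ τ := div_pos hμt hμτ
      have hs : Real.sign (τ - t) = -1 := Real.sign_of_neg (by linarith)
      have hGb : ‖greenFunction U V P τ t x‖ ≤ N₂ * (μ t / μ τ) ^ (-b) * μ t ^ ε * ‖x‖ := by
        have hG : greenFunction U V P τ t = -((V τ t).comp (1 - P t)) := by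
          simp only [greenFunction, if_neg (by linarith : ¬ t < τ), if_pos hτt]
        rw [hG, ContinuousLinearMap.neg_apply, norm_neg]
        exact (ContinuousLinearMap.le_opNorm _ x).trans
          (mul_le_mul_of_nonneg_right (hdich₂ τ t hτ0.le hτt.le) (norm_nonneg x))
      have hGp : ‖greenFunction U V P τ t x‖ ^ p
          ≤ N₂ ^ p * (μ τ / μ t) ^ (b * p) * μ t ^ (p * ε) * ‖x‖ ^ p := by
        have h1 := Real.rpow_le_rpow (norm_nonneg _) hGb hp.le
        rw [Real.mul_rpow (mul_nonneg (mul_nonneg hN₂0 (Real.rpow_nonneg hY.le _))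
              (Real.rpow_nonneg hμt.le _)) (norm_nonneg x),
            Real.mul_rpow (mul_nonneg hN₂0 (Real.rpow_nonneg hY.le _))
              (Real.rpow_nonneg hμt.le _),
            Real.mul_rpow hN₂0 (Real.rpow_nonneg hY.le _),
            ← Real.rpow_mul hY.le, ← Real.rpow_mul hμt.le, mul_comm ε p,
            show (-b) * p = -(b * p) by ring,
            aux_div_rpow_neg hμt.le hμτ.le (b * p)] at h1
        exact h1
      have e3 : (μ τ / μ t) ^ (p * γ * (-1:ℝ)) * (μ τ / μ t) ^ (b * p)
          = (μ τ / μ t) ^ c₂ := by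
        rw [← Real.rpow_add hX, hc₂def]; congr 1; ring
      rw [hs]
      have hnn : 0 ≤ deriv μ τ / μ τ * (μ τ / μ t) ^ (p * γ * (-1:ℝ)) :=
        mul_nonneg (div_nonneg (aux_deriv_nonneg hmono hτ0 (hdiff τ hτ0.le)) hμτ.le)
          (Real.rpow_nonneg hX.le _)
      calc deriv μ τ / μ τ * (μ τ / μ t) ^ (p * γ * (-1:ℝ)) * ‖greenFunction U V P τ t x‖ ^ p
          ≤ deriv μ τ / μ τ * (μ τ / μ t) ^ (p * γ * (-1:ℝ)) *
            (N₂ ^ p * (μ τ / μ t) ^ (b * p) * μ t ^ (p * ε) * ‖x‖ ^ p) :=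
            mul_le_mul_of_nonneg_left hGp hnn
        _ = K₂ * (deriv μ τ / μ τ * (μ τ / μ t) ^ c₂) := by
            rw [← e3, hK₂def]; ring
    calc ∫⁻ τ in Set.Ioo (0:ℝ) t, ENNReal.ofReal
          (deriv μ τ / μ τ * (μ τ / μ t) ^ (p * γ * Real.sign (τ - t)) *
            ‖greenFunction U V P τ t x‖ ^ p)
        ≤ ∫⁻ τ in Set.Ioo (0:ℝ) t,
            ENNReal.ofReal (K₂ * (deriv μ τ / μ τ * (μ τ / μ t) ^ c₂)) :=
          lintegral_mono_ae ((ae_restrict_mem measurableSet_Ioo).mono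
            fun τ hτ => ENNReal.ofReal_le_ofReal (hpt τ hτ))
      _ = ENNReal.ofReal K₂ * ∫⁻ τ in Set.Ioo (0:ℝ) t,
            ENNReal.ofReal (deriv μ τ / μ τ * (μ τ / μ t) ^ c₂) := by
          simp_rw [ENNReal.ofReal_mul hK₂0]
          exact lintegral_const_mul' _ _ ENNReal.ofReal_ne_top
      _ ≤ ENNReal.ofReal K₂ * ENNReal.ofReal
            (μ t ^ c₂ / (c₂ * μ t ^ c₂) - μ 0 ^ c₂ / (c₂ * μ t ^ c₂)) :=
          mul_le_mul_right (aux_piece μ hμ1 hmono hdiff hc₂.ne' ht le_rfl ht) _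
      _ ≤ ENNReal.ofReal K₂ * ENNReal.ofReal (1 / c₂) := by
          apply mul_le_mul_right
          apply ENNReal.ofReal_le_ofReal
          have hne : μ t ^ c₂ ≠ 0 := (Real.rpow_pos_of_pos hμt _).ne'
          have h1 : μ t ^ c₂ / (c₂ * μ t ^ c₂) = 1 / c₂ := by
            field_simp
          have h2 : 0 ≤ μ 0 ^ c₂ / (c₂ * μ t ^ c₂) :=
            div_nonneg (Real.rpow_nonneg (hpos 0 le_rfl).le _)
              (mul_nonneg hc₂.le (Real.rpow_nonneg hμt.le _))
          linarith
      _ = ENNReal.ofReal (K₂ * (1 / c₂)) := (ENNReal.ofReal_mul hK₂0).symm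
  have hIoi : ∫⁻ τ in Set.Ioi t, ENNReal.ofReal
        (deriv μ τ / μ τ * (μ τ / μ t) ^ (p * γ * Real.sign (τ - t)) *
          ‖greenFunction U V P τ t x‖ ^ p)
      ≤ ENNReal.ofReal (K₁ * (1 / c₁)) := by
    have hUn : (⋃ n : ℕ, Set.Ioo t (t + (n:ℝ) + 1)) = Set.Ioi t := by
      ext y
      simp only [Set.mem_iUnion, Set.mem_Ioo, Set.mem_Ioi]
      constructor
      · rintro ⟨n, h1, _⟩; exact h1
      · intro hy
        obtain ⟨n, hn⟩ := exists_nat_gt (y - t)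
        exact ⟨n, hy, by linarith⟩
    have hdir : Directed (· ⊆ ·) (fun n : ℕ => Set.Ioo t (t + (n:ℝ) + 1)) := by
      apply Monotone.directed_le
      intro m n hmn
      apply Set.Ioo_subset_Ioo_right
      have : (m:ℝ) ≤ n := Nat.cast_le.2 hmn
      linarith
    rw [← hUn, setLIntegral_iUnion_of_directed _ hdir]
    apply iSup_le
    intro n
    have hv : t ≤ t + (n:ℝ) + 1 := by
      have : (0:ℝ) ≤ n := Nat.cast_nonneg n
      linarith
    have hpt : ∀ τ ∈ Set.Ioo t (t + (n:ℝ) + 1),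
        deriv μ τ / μ τ * (μ τ / μ t) ^ (p * γ * Real.sign (τ - t)) *
          ‖greenFunction U V P τ t x‖ ^ p
        ≤ K₁ * (deriv μ τ / μ τ * (μ τ / μ t) ^ (-c₁)) := by
      intro τ hτ
      have hτt : t < τ := hτ.1
      have hτ0 : (0:ℝ) < τ := lt_of_le_of_lt ht hτt
      have hμτ : 0 < μ τ := hpos τ hτ0.le
      have hX : 0 < μ τ / μ t := div_pos hμτ hμt
      have hs : Real.sign (τ - t) = 1 := Real.sign_of_pos (by linarith)
      have hGb : ‖greenFunction U V P τ t x‖ ≤ N₁ * (μ τ / μ t) ^ (-a) * μ t ^ ε * ‖x‖ := by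
        have hG : greenFunction U V P τ t = (U τ t).comp (P t) := by
          simp only [greenFunction, if_pos hτt]
        rw [hG]
        exact (ContinuousLinearMap.le_opNorm _ x).trans
          (mul_le_mul_of_nonneg_right (hdich₁ t τ ht hτt.le) (norm_nonneg x))
      have hGp : ‖greenFunction U V P τ t x‖ ^ p
          ≤ N₁ ^ p * (μ τ / μ t) ^ (-a * p) * μ t ^ (p * ε) * ‖x‖ ^ p := by
        have h1 := Real.rpow_le_rpow (norm_nonneg _) hGb hp.le
        rw [Real.mul_rpow (mul_nonneg (mul_nonneg hN₁0 (Real.rpow_nonneg hX.le _))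
              (Real.rpow_nonneg hμt.le _)) (norm_nonneg x),
            Real.mul_rpow (mul_nonneg hN₁0 (Real.rpow_nonneg hX.le _))
              (Real.rpow_nonneg hμt.le _),
            Real.mul_rpow hN₁0 (Real.rpow_nonneg hX.le _),
            ← Real.rpow_mul hX.le, ← Real.rpow_mul hμt.le, mul_comm ε p] at h1
        exact h1
      have e3 : (μ τ / μ t) ^ (p * γ * (1:ℝ)) * (μ τ / μ t) ^ (-a * p)
          = (μ τ / μ t) ^ (-c₁) := by
        rw [← Real.rpow_add hX, hc₁def]; congr 1; ring
      rw [hs]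
      have hnn : 0 ≤ deriv μ τ / μ τ * (μ τ / μ t) ^ (p * γ * (1:ℝ)) :=
        mul_nonneg (div_nonneg (aux_deriv_nonneg hmono hτ0 (hdiff τ hτ0.le)) hμτ.le)
          (Real.rpow_nonneg hX.le _)
      calc deriv μ τ / μ τ * (μ τ / μ t) ^ (p * γ * (1:ℝ)) * ‖greenFunction U V P τ t x‖ ^ p
          ≤ deriv μ τ / μ τ * (μ τ / μ t) ^ (p * γ * (1:ℝ)) *
            (N₁ ^ p * (μ τ / μ t) ^ (-a * p) * μ t ^ (p * ε) * ‖x‖ ^ p) :=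
            mul_le_mul_of_nonneg_left hGp hnn
        _ = K₁ * (deriv μ τ / μ τ * (μ τ / μ t) ^ (-c₁)) := by
            rw [← e3, hK₁def]; ring
    calc ∫⁻ τ in Set.Ioo t (t + (n:ℝ) + 1), ENNReal.ofReal
          (deriv μ τ / μ τ * (μ τ / μ t) ^ (p * γ * Real.sign (τ - t)) *
            ‖greenFunction U V P τ t x‖ ^ p)
        ≤ ∫⁻ τ in Set.Ioo t (t + (n:ℝ) + 1),
            ENNReal.ofReal (K₁ * (deriv μ τ / μ τ * (μ τ / μ t) ^ (-c₁))) :=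
          lintegral_mono_ae ((ae_restrict_mem measurableSet_Ioo).mono
            fun τ hτ => ENNReal.ofReal_le_ofReal (hpt τ hτ))
      _ = ENNReal.ofReal K₁ * ∫⁻ τ in Set.Ioo t (t + (n:ℝ) + 1),
            ENNReal.ofReal (deriv μ τ / μ τ * (μ τ / μ t) ^ (-c₁)) := by
          simp_rw [ENNReal.ofReal_mul hK₁0]
          exact lintegral_const_mul' _ _ ENNReal.ofReal_ne_top
      _ ≤ ENNReal.ofReal K₁ * ENNReal.ofReal
            (μ (t + (n:ℝ) + 1) ^ (-c₁) / (-c₁ * μ t ^ (-c₁)) -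
              μ t ^ (-c₁) / (-c₁ * μ t ^ (-c₁))) :=
          mul_le_mul_right (aux_piece μ hμ1 hmono hdiff (neg_ne_zero.2 hc₁.ne') ht ht hv) _
      _ ≤ ENNReal.ofReal K₁ * ENNReal.ofReal (1 / c₁) := by
          apply mul_le_mul_right
          apply ENNReal.ofReal_le_ofReal
          have hne : μ t ^ (-c₁) ≠ 0 := (Real.rpow_pos_of_pos hμt _).ne'
          have h2 : μ t ^ (-c₁) / (-c₁ * μ t ^ (-c₁)) = -(1 / c₁) := by
            field_simp
          have h1 : μ (t + (n:ℝ) + 1) ^ (-c₁) / (-c₁ * μ t ^ (-c₁)) ≤ 0 := by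
            apply div_nonpos_of_nonneg_of_nonpos
              (Real.rpow_nonneg (hpos _ (le_trans ht hv)).le _)
            nlinarith [Real.rpow_pos_of_pos hμt (-c₁)]
          linarith
      _ = ENNReal.ofReal (K₁ * (1 / c₁)) := (ENNReal.ofReal_mul hK₁0).symm
  have hsplit : Set.Ioi (0:ℝ) = Set.Ioc 0 t ∪ Set.Ioi t := (Set.Ioc_union_Ioi_eq_Ioi ht).symm
  rw [hsplit, lintegral_union measurableSet_Ioi Set.Ioc_disjoint_Ioi_same]
  calc _ ≤ ENNReal.ofReal (K₂ * (1 / c₂)) + ENNReal.ofReal (K₁ * (1 / c₁)) :=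
        add_le_add hIoc hIoi
    _ = ENNReal.ofReal (K₂ * (1 / c₂) + K₁ * (1 / c₁)) :=
        (ENNReal.ofReal_add (mul_nonneg hK₂0 (one_div_nonneg.2 hc₂.le))
          (mul_nonneg hK₁0 (one_div_nonneg.2 hc₁.le))).symm
    _ ≤ _ := by
        apply ENNReal.ofReal_le_ofReal
        apply le_of_eq
        rw [hK₁def, hK₂def, hc₁def, hc₂def]
        ring
end
end

section
/- Let p > 0 and let μ : [0,∞) → [1,∞) be a differentiable growth rate. Suppose the evolution operator U : Δ → B(X) with compatible projection valued function P satisfies ‖U_Q(s,t)Q(t)‖ ≤ N₂ (μ(t)/μ(s))^{−b} μ(t)^ε for all t ≥ s ≥ 0, where b > 0, ε ≥ 0, N₂ ≥ 1. Then for every 0 < γ < b and every t ≥ 0, x ∈ X: ∫₀^{t} (μ'(τ)/μ(τ)) (μ(t)/μ(τ))^{pγ} ‖U_Q(τ,t)Q(t)x‖^p dτ ≤ (N₂^p/(p(b−γ))) μ(t)^{pε} ‖x‖^p. -/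
open Real MeasureTheory Filter

noncomputable section

variable {X : Type*} [NormedAddCommGroup X] [NormedSpace ℝ X]

open Topology Set

/-- The "unstable part" of Theorem 3.1: if `‖U_Q(s,t)Q(t)‖ ≤ N₂ (μ(t)/μ(s))^{-b} μ(t)^ε`
for all `t ≥ s ≥ 0`, then for every `0 < γ < b`, `t ≥ 0`, `x ∈ X`:
`∫₀^t (μ'(τ)/μ(τ)) (μ(t)/μ(τ))^{pγ} ‖U_Q(τ,t)Q(t)x‖^p dτ
  ≤ (N₂^p/(p(b-γ))) μ(t)^{pε} ‖x‖^p`. -/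
theorem unstable_integral_estimate
    {X : Type*} [NormedAddCommGroup X] [NormedSpace ℝ X] [CompleteSpace X]
    (μ : ℝ → ℝ) (hgr : IsGrowthRate μ)
    (hdiff : ∀ t, 0 ≤ t → DifferentiableAt ℝ μ t)
    (p : ℝ) (hp : 0 < p)
    (U V : ℝ → ℝ → X →L[ℝ] X) (P : ℝ → X →L[ℝ] X)
    (hU : IsEvolutionOperator U) (hP : IsProjectionValued P)
    (hC : CompatibleProjection U V P)
    (b ε N₂ : ℝ) (hb : 0 < b) (hε : 0 ≤ ε) (hN₂ : 1 ≤ N₂)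
    (hdich : ∀ s t, 0 ≤ s → s ≤ t →
      ‖(V s t).comp (1 - P t)‖ ≤ N₂ * (μ t / μ s) ^ (-b) * μ t ^ ε)
    (γ : ℝ) (hγ0 : 0 < γ) (hγ : γ < b) (t : ℝ) (ht : 0 ≤ t) (x : X) :
    ∫⁻ τ in Set.Ioc (0 : ℝ) t, ENNReal.ofReal
        (deriv μ τ / μ τ * (μ t / μ τ) ^ (p * γ) * ‖V τ t ((1 - P t) x)‖ ^ p)
      ≤ ENNReal.ofReal (N₂ ^ p / (p * (b - γ)) * μ t ^ (p * ε) * ‖x‖ ^ p) := by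
  set c : ℝ := p * (b - γ) with hc_def
  have hc : 0 < c := mul_pos hp (sub_pos.2 hγ)
  have hμ1 : ∀ s, 0 ≤ s → 1 ≤ μ s := hgr.1
  have hμt1 : 1 ≤ μ t := hμ1 t ht
  have hμtpos : (0:ℝ) < μ t := lt_of_lt_of_le one_pos hμt1
  -- the auxiliary monotone function h = (μ ∘ max · 0)^c
  set h : ℝ → ℝ := fun s => μ (max s 0) ^ c with hh_def
  have hmono : Monotone h := by
    intro s₁ s₂ hs
    have h0 : (0:ℝ) ≤ max s₁ 0 := le_max_right _ _
    have h0' : (0:ℝ) ≤ max s₂ 0 := le_max_right _ _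
    have hle : μ (max s₁ 0) ≤ μ (max s₂ 0) :=
      hgr.2.1 h0 h0' (max_le_max hs le_rfl)
    exact Real.rpow_le_rpow (le_trans zero_le_one (hμ1 _ h0)) hle hc.le
  have hcont : ∀ s, 0 ≤ s → ContinuousAt h s := by
    intro s hs
    have hmax : ContinuousAt (fun r : ℝ => max r 0) s :=
      (continuous_id.max continuous_const).continuousAt
    have hμc : ContinuousAt μ (max s 0) := by
      rw [max_eq_left hs]; exact (hdiff s hs).continuousAt
    have h1 : ContinuousAt (fun r : ℝ => μ (max r 0)) s := ContinuousAt.comp hμc hmax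
    exact h1.rpow_const (Or.inr hc.le)
  have hHeq : ∀ s, 0 ≤ s → hmono.stieltjesFunction s = h s := by
    intro s hs
    rw [hmono.stieltjesFunction_eq]
    exact rightLim_eq_of_tendsto
      ((hcont s hs).continuousWithinAt)
  -- derivative of h on (0, t]
  have hD : ∀ τ ∈ Set.Ioc (0:ℝ) t,
      HasDerivAt h (deriv μ τ * c * μ τ ^ (c - 1)) τ := by
    intro τ hτ
    have hτ0 : (0:ℝ) < τ := hτ.1
    have hne : μ τ ≠ 0 := ne_of_gt (lt_of_lt_of_le one_pos (hμ1 τ hτ0.le))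
    have h1 : HasDerivAt (fun s => μ s ^ c) (deriv μ τ * c * μ τ ^ (c - 1)) τ :=
      (hdiff τ hτ0.le).hasDerivAt.rpow_const (Or.inl hne)
    refine h1.congr_of_eventuallyEq ?_
    filter_upwards [Ioi_mem_nhds hτ0] with s hs
    simp [hh_def, max_eq_left (le_of_lt (mem_Ioi.1 hs))]
  -- deriv μ is nonnegative on (0, t]
  have hd0 : ∀ τ ∈ Set.Ioc (0:ℝ) t, 0 ≤ deriv μ τ := by
    intro τ hτ
    have h1 : Tendsto (slope μ τ) (𝓝[>] τ) (𝓝 (deriv μ τ)) :=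
      ((hasDerivAt_iff_tendsto_slope.1 (hdiff τ hτ.1.le).hasDerivAt).mono_left
        (nhdsWithin_mono τ fun y hy => ne_of_gt hy))
    refine ge_of_tendsto h1 ?_
    filter_upwards [self_mem_nhdsWithin] with s hs
    rw [slope_def_field]
    have hms : μ τ ≤ μ s := hgr.2.1 hτ.1.le (hτ.1.le.trans (le_of_lt hs)) (le_of_lt hs)
    have : (0:ℝ) < s - τ := sub_pos.2 hs
    exact div_nonneg (sub_nonneg.2 hms) this.le
  -- the constant K
  set K : ℝ := N₂ ^ p * μ t ^ (p * ε) * ‖x‖ ^ p * μ t ^ (-c) / c with hK_def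
  have hK0 : 0 ≤ K := by
    apply div_nonneg _ hc.le
    have h1 : (0:ℝ) ≤ N₂ ^ p := Real.rpow_nonneg (le_trans zero_le_one hN₂) p
    have h2 : (0:ℝ) ≤ μ t ^ (p * ε) := Real.rpow_nonneg hμtpos.le _
    have h3 : (0:ℝ) ≤ ‖x‖ ^ p := Real.rpow_nonneg (norm_nonneg x) p
    have h4 : (0:ℝ) ≤ μ t ^ (-c) := Real.rpow_nonneg hμtpos.le _
    positivity
  -- the dominating function
  set D : ℝ → ℝ := fun τ => deriv μ τ * c * μ (max τ 0) ^ (c - 1) with hD_def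
  -- pointwise bound
  have hpoint : ∀ τ ∈ Set.Ioc (0:ℝ) t,
      ENNReal.ofReal (deriv μ τ / μ τ * (μ t / μ τ) ^ (p * γ) *
        ‖V τ t ((1 - P t) x)‖ ^ p) ≤ ENNReal.ofReal K * ENNReal.ofReal (D τ) := by
    intro τ hτ
    have hτ0 : (0:ℝ) < τ := hτ.1
    have hm1 : 1 ≤ μ τ := hμ1 τ hτ0.le
    have hmpos : (0:ℝ) < μ τ := lt_of_lt_of_le one_pos hm1
    have hRpos : (0:ℝ) < μ t / μ τ := div_pos hμtpos hmpos
    have hd : 0 ≤ deriv μ τ := hd0 τ hτ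
    rw [← ENNReal.ofReal_mul hK0]
    apply ENNReal.ofReal_le_ofReal
    -- bound on the norm
    have hv : ‖V τ t ((1 - P t) x)‖ ≤ N₂ * (μ t / μ τ) ^ (-b) * μ t ^ ε * ‖x‖ := by
      have h1 : ‖((V τ t).comp (1 - P t)) x‖ ≤ ‖(V τ t).comp (1 - P t)‖ * ‖x‖ :=
        ((V τ t).comp (1 - P t)).le_opNorm x
      rw [ContinuousLinearMap.comp_apply] at h1
      exact h1.trans (mul_le_mul_of_nonneg_right (hdich τ t hτ0.le hτ.2) (norm_nonneg x))
    have hvp : ‖V τ t ((1 - P t) x)‖ ^ p ≤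
        N₂ ^ p * (μ t / μ τ) ^ (-(b * p)) * μ t ^ (ε * p) * ‖x‖ ^ p := by
      have h2 : ‖V τ t ((1 - P t) x)‖ ^ p ≤ (N₂ * (μ t / μ τ) ^ (-b) * μ t ^ ε * ‖x‖) ^ p :=
        Real.rpow_le_rpow (norm_nonneg _) hv hp.le
      refine h2.trans_eq ?_
      rw [Real.mul_rpow (by positivity) (norm_nonneg x),
        Real.mul_rpow (by positivity) (Real.rpow_nonneg hμtpos.le ε),
        Real.mul_rpow (by linarith) (Real.rpow_nonneg hRpos.le (-b)),
        ← Real.rpow_mul hRpos.le, ← Real.rpow_mul hμtpos.le, neg_mul]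
    -- main computation
    have hmain : deriv μ τ / μ τ * (μ t / μ τ) ^ (p * γ) *
        (N₂ ^ p * (μ t / μ τ) ^ (-(b * p)) * μ t ^ (ε * p) * ‖x‖ ^ p) = K * D τ := by
      have e1 : (μ t / μ τ) ^ (p * γ) * (μ t / μ τ) ^ (-(b * p)) = (μ t / μ τ) ^ (-c) := by
        rw [← Real.rpow_add hRpos, hc_def]; ring_nf
      have e2 : (μ t / μ τ) ^ (-c) = μ t ^ (-c) * μ τ ^ c := by
        rw [Real.div_rpow hμtpos.le hmpos.le, Real.rpow_neg hmpos.le, div_eq_mul_inv, inv_inv]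
      have e3 : μ τ ^ (c - 1) = μ τ ^ c / μ τ := by
        rw [Real.rpow_sub hmpos, Real.rpow_one]
      have e4 : μ (max τ 0) = μ τ := by rw [max_eq_left hτ0.le]
      rw [hK_def, hD_def]
      simp only [e4, e3]
      rw [show deriv μ τ / μ τ * (μ t / μ τ) ^ (p * γ) *
            (N₂ ^ p * (μ t / μ τ) ^ (-(b * p)) * μ t ^ (ε * p) * ‖x‖ ^ p)
          = ((μ t / μ τ) ^ (p * γ) * (μ t / μ τ) ^ (-(b * p))) *
            (N₂ ^ p * μ t ^ (ε * p) * ‖x‖ ^ p * (deriv μ τ / μ τ)) from by ring,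
        e1, e2, mul_comm ε p]
      field_simp
    calc deriv μ τ / μ τ * (μ t / μ τ) ^ (p * γ) * ‖V τ t ((1 - P t) x)‖ ^ p
        ≤ deriv μ τ / μ τ * (μ t / μ τ) ^ (p * γ) *
          (N₂ ^ p * (μ t / μ τ) ^ (-(b * p)) * μ t ^ (ε * p) * ‖x‖ ^ p) := by
          apply mul_le_mul_of_nonneg_left hvp
          exact mul_nonneg (div_nonneg hd hmpos.le) (Real.rpow_nonneg hRpos.le _)
      _ = K * D τ := hmain
  -- integrate
  calc ∫⁻ τ in Set.Ioc (0:ℝ) t, ENNReal.ofReal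
        (deriv μ τ / μ τ * (μ t / μ τ) ^ (p * γ) * ‖V τ t ((1 - P t) x)‖ ^ p)
      ≤ ∫⁻ τ in Set.Ioc (0:ℝ) t, ENNReal.ofReal K * ENNReal.ofReal (D τ) :=
        setLIntegral_mono' measurableSet_Ioc hpoint
    _ = ENNReal.ofReal K * ∫⁻ τ in Set.Ioc (0:ℝ) t, ENNReal.ofReal (D τ) :=
        lintegral_const_mul' _ _ ENNReal.ofReal_ne_top
    _ = ENNReal.ofReal K * ∫⁻ τ in Set.Ioc (0:ℝ) t,
          hmono.stieltjesFunction.measure.rnDeriv volume τ := by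
        congr 1
        refine lintegral_congr_ae ?_
        have h1 : ∀ᵐ τ ∂(volume : Measure ℝ),
            HasDerivAt h ((hmono.stieltjesFunction.measure.rnDeriv volume τ).toReal) τ :=
          hmono.ae_hasDerivAt
        have h2 : ∀ᵐ τ ∂(volume : Measure ℝ),
            hmono.stieltjesFunction.measure.rnDeriv volume τ < ⊤ :=
          Measure.rnDeriv_lt_top _ _
        filter_upwards [ae_restrict_of_ae h1, ae_restrict_of_ae h2,
          ae_restrict_mem measurableSet_Ioc] with τ hτ1 hτ2 hτ3
        have := (hD τ hτ3).unique hτ1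
        have hDτ : D τ = (hmono.stieltjesFunction.measure.rnDeriv volume τ).toReal := by
          rw [hD_def]; simp only [max_eq_left hτ3.1.le]; exact this
        rw [hDτ, ENNReal.ofReal_toReal hτ2.ne]
    _ ≤ ENNReal.ofReal K * hmono.stieltjesFunction.measure (Set.Ioc 0 t) := by
        gcongr
        exact Measure.setLIntegral_rnDeriv_le _
    _ ≤ ENNReal.ofReal (N₂ ^ p / (p * (b - γ)) * μ t ^ (p * ε) * ‖x‖ ^ p) := by
        rw [StieltjesFunction.measure_Ioc, hHeq t ht, hHeq 0 le_rfl,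
          ← ENNReal.ofReal_mul hK0]
        apply ENNReal.ofReal_le_ofReal
        have hh0 : h 0 = 1 := by
          simp [hh_def, hgr.2.2.1, Real.one_rpow]
        have hht : h t = μ t ^ c := by simp [hh_def, max_eq_left ht]
        have hle : h t - h 0 ≤ μ t ^ c := by
          rw [hht, hh0]; linarith
        have h1 : μ t ^ (-c) * μ t ^ c = 1 := by
          rw [← Real.rpow_add hμtpos]; simp
        calc K * (h t - h 0) ≤ K * (μ t ^ c) := mul_le_mul_of_nonneg_left hle hK0
          _ = N₂ ^ p / c * μ t ^ (p * ε) * ‖x‖ ^ p := by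
              rw [hK_def]
              calc N₂ ^ p * μ t ^ (p * ε) * ‖x‖ ^ p * μ t ^ (-c) / c * μ t ^ c
                  = N₂ ^ p * μ t ^ (p * ε) * ‖x‖ ^ p / c * (μ t ^ (-c) * μ t ^ c) := by
                    ring
                _ = N₂ ^ p / c * μ t ^ (p * ε) * ‖x‖ ^ p := by rw [h1]; ring
end
end

section
/- Let μ : [0,∞) → [1,∞) be a differentiable growth rate with K_μ := sup_{t ≥ 0} μ'(t)/μ(t) < +∞, and let U : Δ → B(X) be an evolution operator with compatible projection valued function P satisfying ‖U(t,s)P(s)‖ ≤ M (μ'(s)/μ(s)) (μ(t)/μ(s))^{ω} μ(s)^α for all t > s ≥ 0, for some ω > 0, α ≥ 0, M ≥ 1. Assume that for some p ≥ 1, γ > α, ε ≥ 0 and D > 0 one has ∫_s^{+∞} (μ'(τ)/μ(τ)) (μ(τ)/μ(s))^{pγ} ‖U(τ,s)P(s)x‖^p dτ ≤ D μ(s)^{pε} ‖x‖^p for all s ≥ 0 and x ∈ X. Then for all t ≥ s+1, s ≥ 0 and x ∈ X: ‖U(t,s)P(s)x‖^p ≤ D M^p K_μ^{p−1} e^{K_μ(ω+γ)p}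 (μ(t)/μ(s))^{−p(γ−α)} μ(s)^{p(ε+α)} ‖x‖^p. -/
open Real MeasureTheory Filter

noncomputable section

variable {X : Type*} [NormedAddCommGroup X] [NormedSpace ℝ X]

/-- The derivative of a function monotone on `[0,∞)` is nonnegative there. -/
lemma deriv_nonneg_of_monotoneOn_aux {μ : ℝ → ℝ} (hm : MonotoneOn μ (Set.Ici 0))
    {τ : ℝ} (hτ : 0 ≤ τ) (hd : DifferentiableAt ℝ μ τ) : 0 ≤ deriv μ τ := by
  have h := hd.hasDerivAt
  rw [hasDerivAt_iff_tendsto_slope] at h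
  have h' : Filter.Tendsto (slope μ τ) (nhdsWithin τ (Set.Ioi τ)) (nhds (deriv μ τ)) :=
    h.mono_left (nhdsWithin_mono _ (fun y hy => hy.ne'))
  refine ge_of_tendsto h' ?_
  filter_upwards [self_mem_nhdsWithin] with y hy
  have hτy : τ < y := hy
  rw [slope_def_field]
  have h1 : μ τ ≤ μ y := hm hτ (le_trans hτ hτy.le) hτy.le
  exact div_nonneg (by linarith) (by linarith)

/-- Mean value estimate: `μ b ≤ exp (Kμ (b - a)) μ a`. -/
lemma mu_ratio_le_aux {μ : ℝ → ℝ} {Kμ : ℝ}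
    (hpos : ∀ r, 0 ≤ r → 0 < μ r)
    (hdiff : ∀ t, 0 ≤ t → DifferentiableAt ℝ μ t)
    (hKμ : ∀ t, 0 ≤ t → deriv μ t / μ t ≤ Kμ)
    {a b : ℝ} (ha : 0 ≤ a) (hab : a ≤ b) : μ b ≤ Real.exp (Kμ * (b - a)) * μ a := by
  rcases eq_or_lt_of_le hab with rfl | h
  · simp [le_of_eq]
  · have hcont : ContinuousOn (fun x => Real.log (μ x)) (Set.Icc a b) := fun x hx =>
      (((Real.continuousAt_log (hpos x (ha.trans hx.1)).ne').comp
        (hdiff x (ha.trans hx.1)).continuousAt)).continuousWithinAt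
    obtain ⟨c, hc, hceq⟩ := exists_hasDerivAt_eq_slope (fun x => Real.log (μ x))
      (fun x => deriv μ x / μ x) h hcont
      (fun x hx => ((hdiff x (ha.trans hx.1.le)).hasDerivAt.log
        (hpos x (ha.trans hx.1.le)).ne'))
    have hcb : deriv μ c / μ c ≤ Kμ := hKμ c (ha.trans hc.1.le)
    have hslope : Real.log (μ b) - Real.log (μ a) = (deriv μ c / μ c) * (b - a) := by
      rw [hceq, div_mul_cancel₀ _ (sub_ne_zero.2 h.ne')]
    have hle : Real.log (μ b) - Real.log (μ a) ≤ Kμ * (b - a) := by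
      rw [hslope]
      have hba : (0:ℝ) ≤ b - a := by linarith
      exact mul_le_mul_of_nonneg_right hcb hba
    have hb := hpos b (ha.trans hab)
    have hA := hpos a ha
    calc μ b = Real.exp (Real.log (μ b)) := (Real.exp_log hb).symm
      _ ≤ Real.exp (Kμ * (b - a) + Real.log (μ a)) := by
          apply Real.exp_le_exp.2; linarith
      _ = Real.exp (Kμ * (b - a)) * μ a := by rw [Real.exp_add, Real.exp_log hA]

set_option maxHeartbeats 2000000 in
/-- The estimate \eqref{eq:maj-1} in the proof of Theorem 3.2: for `t ≥ s + 1`,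
`‖U(t,s)P(s)x‖^p ≤ D M^p K_μ^{p-1} e^{K_μ(ω+γ)p} (μ(t)/μ(s))^{-p(γ-α)} μ(s)^{p(ε+α)} ‖x‖^p`. -/
theorem stable_pointwise_estimate_far
    {X : Type*} [NormedAddCommGroup X] [NormedSpace ℝ X] [CompleteSpace X]
    (μ : ℝ → ℝ) (Kμ : ℝ) (hgr : IsGrowthRate μ)
    (hdiff : ∀ t, 0 ≤ t → DifferentiableAt ℝ μ t)
    (hKμ : ∀ t, 0 ≤ t → deriv μ t / μ t ≤ Kμ)
    (U V : ℝ → ℝ → X →L[ℝ] X) (P : ℝ → X →L[ℝ] X)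
    (hU : IsEvolutionOperator U) (hP : IsProjectionValued P)
    (hC : CompatibleProjection U V P)
    (M ω α : ℝ) (hω : 0 < ω) (hα : 0 ≤ α) (hM : 1 ≤ M)
    (hUP : ∀ s t, 0 ≤ s → s < t →
      ‖(U t s).comp (P s)‖ ≤ M * (deriv μ s / μ s) * (μ t / μ s) ^ ω * μ s ^ α)
    (p γ ε D : ℝ) (hp : 1 ≤ p) (hγ : α < γ) (hε : 0 ≤ ε) (hD : 0 < D)
    (hint : ∀ s, 0 ≤ s → ∀ x : X,
      ∫⁻ τ in Set.Ioi s, ENNReal.ofReal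
          (deriv μ τ / μ τ * (μ τ / μ s) ^ (p * γ) * ‖U τ s (P s x)‖ ^ p)
        ≤ ENNReal.ofReal (D * μ s ^ (p * ε) * ‖x‖ ^ p)) :
    ∀ s t, 0 ≤ s → s + 1 ≤ t → ∀ x : X,
      ‖U t s (P s x)‖ ^ p ≤
        D * M ^ p * Kμ ^ (p - 1) * Real.exp (Kμ * (ω + γ) * p) *
          (μ t / μ s) ^ (-(p * (γ - α))) * μ s ^ (p * (ε + α)) * ‖x‖ ^ p := by
  intro s t hs hst x
  obtain ⟨hμ1, hmono, hμ0, hμtop⟩ := hgr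
  have hpos : ∀ r, 0 ≤ r → 0 < μ r := fun r hr => lt_of_lt_of_le one_pos (hμ1 r hr)
  have hμs : 0 < μ s := hpos s hs
  have ht0 : 0 ≤ t := by linarith
  have ht1 : 0 ≤ t - 1 := by linarith
  have hμt : 0 < μ t := hpos t ht0
  have hp0 : (0:ℝ) ≤ p := by linarith
  have hM0 : (0:ℝ) < M := by linarith
  have hKnn : 0 ≤ Kμ :=
    le_trans (div_nonneg (deriv_nonneg_of_monotoneOn_aux hmono le_rfl (hdiff 0 le_rfl))
      (hpos 0 le_rfl).le) (hKμ 0 le_rfl)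
  set C : ℝ := M ^ p * Kμ ^ (p - 1) * Real.exp (Kμ * (ω + γ) * p) *
      (μ t / μ s) ^ (-(p * (γ - α))) * μ s ^ (α * p) with hCdef
  have hC0 : 0 ≤ C := by positivity
  -- key pointwise estimate on (t-1, t)
  have key : ∀ τ ∈ Set.Ioo (t - 1) t, ‖U t s (P s x)‖ ^ p ≤
      C * (deriv μ τ / μ τ * (μ τ / μ s) ^ (p * γ) * ‖U τ s (P s x)‖ ^ p) := by
    intro τ hτmem
    obtain ⟨hτ1, hτ2⟩ := hτmem
    have hsτ : s < τ := by linarith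
    have hτ0 : 0 ≤ τ := by linarith
    have hμτ : 0 < μ τ := hpos τ hτ0
    have hd0 : 0 ≤ deriv μ τ / μ τ :=
      div_nonneg (deriv_nonneg_of_monotoneOn_aux hmono hτ0 (hdiff τ hτ0)) hμτ.le
    have hdK : deriv μ τ / μ τ ≤ Kμ := hKμ τ hτ0
    set d : ℝ := deriv μ τ / μ τ with hddef
    set v : X := U τ s (P s x) with hvdef
    -- step 1 : the operator factorization
    have e1 : P τ (U τ s (P s x)) = U τ s (P s x) := by
      have h1 : ((P τ).comp (U τ s)) (P s x) = ((U τ s).comp (P s)) (P s x) := by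
        rw [hC.1 s τ hs hsτ.le]
      have h2 : P s (P s x) = P s x := DFunLike.congr_fun (hP.1 s hs) x
      simpa [ContinuousLinearMap.comp_apply, h2] using h1
    have heq : U t s (P s x) = ((U t τ).comp (P τ)) (U τ s (P s x)) := by
      have h3 : ((U t τ).comp (U τ s)) (P s x) = U t s (P s x) := by
        rw [hU.2.1 s τ t hs hsτ.le hτ2.le]
      calc U t s (P s x) = U t τ (U τ s (P s x)) := by
            rw [← h3]; simp [ContinuousLinearMap.comp_apply]
        _ = U t τ (P τ (U τ s (P s x))) := by rw [e1]
        _ = ((U t τ).comp (P τ)) (U τ s (P s x)) := by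
            simp [ContinuousLinearMap.comp_apply]
    have step1 : ‖U t s (P s x)‖ ≤
        (M * d * (μ t / μ τ) ^ ω * μ τ ^ α) * ‖v‖ := by
      rw [heq]
      calc ‖((U t τ).comp (P τ)) v‖ ≤ ‖(U t τ).comp (P τ)‖ * ‖v‖ :=
            ((U t τ).comp (P τ)).le_opNorm v
        _ ≤ (M * d * (μ t / μ τ) ^ ω * μ τ ^ α) * ‖v‖ :=
            mul_le_mul_of_nonneg_right (hUP τ t hτ0 hτ2) (norm_nonneg v)
    have hA0 : 0 ≤ M * d * (μ t / μ τ) ^ ω * μ τ ^ α := by positivity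
    -- facts about μ on [t-1, t]
    have hmvt : μ t ≤ Real.exp Kμ * μ (t - 1) := by
      have := mu_ratio_le_aux hpos hdiff hKμ ht1 (by linarith : t - 1 ≤ t)
      simpa using this
    have hmt : μ (t - 1) ≤ μ τ := hmono ht1 hτ0 hτ1.le
    have hmts : μ t ≤ Real.exp Kμ * μ τ :=
      hmvt.trans (mul_le_mul_of_nonneg_left hmt (Real.exp_pos Kμ).le)
    have hrK : μ t / μ τ ≤ Real.exp Kμ := by
      rw [div_le_iff₀ hμτ]; linarith
    have hqR : Real.exp (-Kμ) * (μ t / μ s) ≤ μ τ / μ s := by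
      have hμτ' : Real.exp (-Kμ) * μ t ≤ μ τ := by
        rw [Real.exp_neg, inv_mul_le_iff₀ (Real.exp_pos Kμ)]
        exact hmts
      calc Real.exp (-Kμ) * (μ t / μ s) = (Real.exp (-Kμ) * μ t) / μ s := by ring
        _ ≤ μ τ / μ s := by gcongr
    have hq0 : (0:ℝ) < μ τ / μ s := by positivity
    have hr0 : (0:ℝ) < μ t / μ τ := by positivity
    -- bound each factor of A^p
    have hdp : d ^ p ≤ Kμ ^ (p - 1) * d := by
      have h4 : d ^ ((p - 1) + 1) = d ^ (p - 1) * d ^ (1:ℝ) :=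
        Real.rpow_add' hd0 (by simp; linarith)
      have h5 : d ^ p = d ^ (p - 1) * d := by
        rw [show p = (p - 1) + 1 by ring] at *
        simpa [Real.rpow_one] using h4
      rw [h5]
      exact mul_le_mul_of_nonneg_right (Real.rpow_le_rpow hd0 hdK (by linarith)) hd0
    have hrω : (μ t / μ τ) ^ (ω * p) ≤ Real.exp (Kμ * (ω * p)) := by
      calc (μ t / μ τ) ^ (ω * p) ≤ (Real.exp Kμ) ^ (ω * p) :=
            Real.rpow_le_rpow hr0.le hrK (by positivity)
        _ = Real.exp (Kμ * (ω * p)) := (Real.exp_mul _ _).symm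
    have hqbound : (μ τ / μ s) ^ (-(p * (γ - α))) ≤
        Real.exp (Kμ * (γ - α) * p) * (μ t / μ s) ^ (-(p * (γ - α))) := by
      have hb0 : (0:ℝ) < Real.exp (-Kμ) * (μ t / μ s) := by positivity
      have hexp0 : -(p * (γ - α)) ≤ 0 := by nlinarith
      calc (μ τ / μ s) ^ (-(p * (γ - α)))
          ≤ (Real.exp (-Kμ) * (μ t / μ s)) ^ (-(p * (γ - α))) :=
            Real.rpow_le_rpow_of_nonpos hb0 hqR hexp0
        _ = (Real.exp (-Kμ)) ^ (-(p * (γ - α))) * (μ t / μ s) ^ (-(p * (γ - α))) :=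
            Real.mul_rpow (Real.exp_pos _).le (by positivity)
        _ = Real.exp (Kμ * (γ - α) * p) * (μ t / μ s) ^ (-(p * (γ - α))) := by
            rw [← Real.exp_mul]; ring_nf
    -- expansion of A^p
    have hApow : (M * d * (μ t / μ τ) ^ ω * μ τ ^ α) ^ p =
        M ^ p * d ^ p * (μ t / μ τ) ^ (ω * p) * μ τ ^ (α * p) := by
      rw [Real.mul_rpow (by positivity) (by positivity),
        Real.mul_rpow (by positivity) (by positivity),
        Real.mul_rpow (by positivity) (by positivity),
        ← Real.rpow_mul hr0.le, ← Real.rpow_mul hμτ.le]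
    have hsplit : μ τ ^ (α * p) =
        (μ τ / μ s) ^ (p * γ) * (μ τ / μ s) ^ (-(p * (γ - α))) * μ s ^ (α * p) := by
      have e2 : (μ τ / μ s) ^ (p * γ) * (μ τ / μ s) ^ (-(p * (γ - α))) =
          (μ τ / μ s) ^ (α * p) := by
        rw [← Real.rpow_add hq0]; congr 1; ring
      rw [e2, Real.div_rpow hμτ.le hμs.le, div_mul_cancel₀ _ (ne_of_gt (by positivity))]
    have step3 : (M * d * (μ t / μ τ) ^ ω * μ τ ^ α) ^ p ≤
        C * (d * (μ τ / μ s) ^ (p * γ)) := by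
      calc (M * d * (μ t / μ τ) ^ ω * μ τ ^ α) ^ p
          = M ^ p * d ^ p * (μ t / μ τ) ^ (ω * p) *
              ((μ τ / μ s) ^ (p * γ) * (μ τ / μ s) ^ (-(p * (γ - α))) * μ s ^ (α * p)) := by
            rw [hApow, hsplit]
        _ ≤ M ^ p * (Kμ ^ (p - 1) * d) * Real.exp (Kμ * (ω * p)) *
              ((μ τ / μ s) ^ (p * γ) *
                (Real.exp (Kμ * (γ - α) * p) * (μ t / μ s) ^ (-(p * (γ - α)))) *
                μ s ^ (α * p)) := by
            gcongr <;> positivity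
        _ = (M ^ p * Kμ ^ (p - 1) *
              (Real.exp (Kμ * (ω * p)) * Real.exp (Kμ * (γ - α) * p)) *
              (μ t / μ s) ^ (-(p * (γ - α))) * μ s ^ (α * p)) *
              (d * (μ τ / μ s) ^ (p * γ)) := by ring
        _ ≤ (M ^ p * Kμ ^ (p - 1) * Real.exp (Kμ * (ω + γ) * p) *
              (μ t / μ s) ^ (-(p * (γ - α))) * μ s ^ (α * p)) *
              (d * (μ τ / μ s) ^ (p * γ)) := by
            gcongr M ^ p * Kμ ^ (p - 1) * ?_ *
              (μ t / μ s) ^ (-(p * (γ - α))) * μ s ^ (α * p) * (d * (μ τ / μ s) ^ (p * γ)) <;>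
              first
                | positivity
                | (rw [← Real.exp_add]
                   exact Real.exp_le_exp.2 (by nlinarith [mul_nonneg (mul_nonneg hKnn hα) hp0]))
        _ = C * (d * (μ τ / μ s) ^ (p * γ)) := by rw [hCdef]
    calc ‖U t s (P s x)‖ ^ p
        ≤ ((M * d * (μ t / μ τ) ^ ω * μ τ ^ α) * ‖v‖) ^ p :=
          Real.rpow_le_rpow (norm_nonneg _) step1 hp0
      _ = (M * d * (μ t / μ τ) ^ ω * μ τ ^ α) ^ p * ‖v‖ ^ p :=
          Real.mul_rpow hA0 (norm_nonneg v)
      _ ≤ (C * (d * (μ τ / μ s) ^ (p * γ))) * ‖v‖ ^ p :=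
          mul_le_mul_of_nonneg_right step3 (Real.rpow_nonneg (norm_nonneg v) p)
      _ = C * (d * (μ τ / μ s) ^ (p * γ) * ‖v‖ ^ p) := by ring
  -- integrate the pointwise estimate over (t-1, t)
  have hsub : Set.Ioo (t - 1) t ⊆ Set.Ioi s := fun τ hτ =>
    lt_of_le_of_lt (by linarith : s ≤ t - 1) hτ.1
  have main : ENNReal.ofReal (‖U t s (P s x)‖ ^ p) ≤
      ENNReal.ofReal (C * (D * μ s ^ (p * ε) * ‖x‖ ^ p)) := by
    calc ENNReal.ofReal (‖U t s (P s x)‖ ^ p)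
        = ∫⁻ τ in Set.Ioo (t - 1) t, ENNReal.ofReal (‖U t s (P s x)‖ ^ p) := by
          rw [MeasureTheory.setLIntegral_const, Real.volume_Ioo,
            show t - (t - 1) = 1 by ring, ENNReal.ofReal_one, mul_one]
      _ ≤ ∫⁻ τ in Set.Ioo (t - 1) t, ENNReal.ofReal
            (C * (deriv μ τ / μ τ * (μ τ / μ s) ^ (p * γ) * ‖U τ s (P s x)‖ ^ p)) := by
          refine MeasureTheory.lintegral_mono_ae ?_
          refine (MeasureTheory.ae_restrict_iff' measurableSet_Ioo).2
            (Filter.Eventually.of_forall fun τ hτ => ?_)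
          exact ENNReal.ofReal_le_ofReal (key τ hτ)
      _ = ∫⁻ τ in Set.Ioo (t - 1) t, ENNReal.ofReal C * ENNReal.ofReal
            (deriv μ τ / μ τ * (μ τ / μ s) ^ (p * γ) * ‖U τ s (P s x)‖ ^ p) := by
          simp_rw [ENNReal.ofReal_mul hC0]
      _ = ENNReal.ofReal C * ∫⁻ τ in Set.Ioo (t - 1) t, ENNReal.ofReal
            (deriv μ τ / μ τ * (μ τ / μ s) ^ (p * γ) * ‖U τ s (P s x)‖ ^ p) :=
          MeasureTheory.lintegral_const_mul' _ _ ENNReal.ofReal_ne_top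
      _ ≤ ENNReal.ofReal C * ∫⁻ τ in Set.Ioi s, ENNReal.ofReal
            (deriv μ τ / μ τ * (μ τ / μ s) ^ (p * γ) * ‖U τ s (P s x)‖ ^ p) :=
          mul_le_mul_right (MeasureTheory.lintegral_mono_set hsub) _
      _ ≤ ENNReal.ofReal C * ENNReal.ofReal (D * μ s ^ (p * ε) * ‖x‖ ^ p) :=
          mul_le_mul_right (hint s hs x) _
      _ = ENNReal.ofReal (C * (D * μ s ^ (p * ε) * ‖x‖ ^ p)) :=
          (ENNReal.ofReal_mul hC0).symm
  have hreal : ‖U t s (P s x)‖ ^ p ≤ C * (D * μ s ^ (p * ε) * ‖x‖ ^ p) := by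
    rwa [ENNReal.ofReal_le_ofReal_iff (by positivity)] at main
  calc ‖U t s (P s x)‖ ^ p ≤ C * (D * μ s ^ (p * ε) * ‖x‖ ^ p) := hreal
    _ = D * M ^ p * Kμ ^ (p - 1) * Real.exp (Kμ * (ω + γ) * p) *
          (μ t / μ s) ^ (-(p * (γ - α))) * μ s ^ (p * (ε + α)) * ‖x‖ ^ p := by
        rw [hCdef, show p * (ε + α) = p * ε + α * p by ring, Real.rpow_add hμs]
        ring
end
end

section
/- Let μ : [0,∞) → [1,∞) be a differentiable growth rate with K_μ := sup_{t ≥ 0} μ'(t)/μ(t) < +∞, and let U : Δ → B(X) be an evolution operator with compatible projection valued function P satisfying ‖U_Q(s,t)Q(t)‖ ≤ M (μ'(t)/μ(t)) (μ(t)/μ(s))^{ω} μ(t)^α for all t > s ≥ 0, for some ω > 0, α ≥ 0, M ≥ 1. Then for any γ > α, ε ≥ 0, for all s ≤ t < s+1 and x ∈ X: ‖U_Q(s,t)Q(t)x‖ ≤ M K_μ e^{K_μ(ω+γ+α)} (μ(t)/μ(s))^{−(γ+α)} μ(t)^{ε+α} ‖x‖. -/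
open Real MeasureTheory Filter
open Topology

noncomputable section

variable {X : Type*} [NormedAddCommGroup X] [NormedSpace ℝ X]

lemma mu_ratio_le (μ : ℝ → ℝ) (Kμ : ℝ) (hgr : IsGrowthRate μ)
    (hdiff : ∀ t, 0 ≤ t → DifferentiableAt ℝ μ t)
    (hKμ : ∀ t, 0 ≤ t → deriv μ t / μ t ≤ Kμ) :
    ∀ s t, 0 ≤ s → s ≤ t → μ t / μ s ≤ Real.exp (Kμ * (t - s)) := by
  have hpos : ∀ u, 0 ≤ u → 0 < μ u := fun u hu => lt_of_lt_of_le one_pos (hgr.1 u hu)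
  have hg' : ∀ u, 0 ≤ u → HasDerivAt (fun v => Kμ * v - Real.log (μ v))
      (Kμ - deriv μ u / μ u) u := by
    intro u hu
    have h1 : HasDerivAt (fun v : ℝ => Kμ * v) Kμ u := by
      simpa using (hasDerivAt_id u).const_mul Kμ
    have h2 : HasDerivAt (fun v => Real.log (μ v)) (deriv μ u / μ u) u := by
      have := (Real.hasDerivAt_log (ne_of_gt (hpos u hu))).comp u (hdiff u hu).hasDerivAt
      simpa [div_eq_inv_mul, Function.comp_def] using this
    exact h1.sub h2
  have hmono : MonotoneOn (fun v => Kμ * v - Real.log (μ v)) (Set.Ici 0) := by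
    apply monotoneOn_of_deriv_nonneg (convex_Ici 0)
    · intro u hu
      exact ((hg' u hu).continuousAt).continuousWithinAt
    · intro u hu
      rw [interior_Ici] at hu
      exact ((hg' u (le_of_lt hu)).differentiableAt).differentiableWithinAt
    · intro u hu
      rw [interior_Ici] at hu
      rw [(hg' u (le_of_lt hu)).deriv]
      have := hKμ u (le_of_lt hu)
      linarith
  intro s t hs hst
  have ht : 0 ≤ t := hs.trans hst
  have h := hmono hs (Set.mem_Ici.2 ht) hst
  simp only at h
  have hlog : Real.log (μ t / μ s) ≤ Kμ * (t - s) := by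
    rw [Real.log_div (ne_of_gt (hpos t ht)) (ne_of_gt (hpos s hs))]
    linarith
  calc μ t / μ s = Real.exp (Real.log (μ t / μ s)) :=
        (Real.exp_log (div_pos (hpos t ht) (hpos s hs))).symm
    _ ≤ Real.exp (Kμ * (t - s)) := Real.exp_le_exp.2 hlog

lemma Kmu_nonneg (μ : ℝ → ℝ) (Kμ : ℝ) (hgr : IsGrowthRate μ)
    (hdiff : ∀ t, 0 ≤ t → DifferentiableAt ℝ μ t)
    (hKμ : ∀ t, 0 ≤ t → deriv μ t / μ t ≤ Kμ) : 0 ≤ Kμ := by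
  by_contra h
  push_neg at h
  obtain ⟨t, h2, ht0⟩ :=
    ((hgr.2.2.2.eventually_ge_atTop 2).and (eventually_ge_atTop (0:ℝ))).exists
  have := mu_ratio_le μ Kμ hgr hdiff hKμ 0 t le_rfl ht0
  rw [hgr.2.2.1, div_one, sub_zero] at this
  have hexp : Real.exp (Kμ * t) ≤ 1 :=
    Real.exp_le_one_iff.2 (mul_nonpos_of_nonpos_of_nonneg h.le ht0)
  linarith


/-- The estimate \eqref{eq:maj-4} in the proof of Theorem 3.2: for `s ≤ t < s + 1`,
`‖U_Q(s,t)Q(t)x‖ ≤ M K_μ e^{K_μ(ω+γ+α)} (μ(t)/μ(s))^{-(γ+α)} μ(t)^{ε+α} ‖x‖`. -/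
theorem unstable_pointwise_estimate_near
    {X : Type*} [NormedAddCommGroup X] [NormedSpace ℝ X] [CompleteSpace X]
    (μ : ℝ → ℝ) (Kμ : ℝ) (hgr : IsGrowthRate μ)
    (hdiff : ∀ t, 0 ≤ t → DifferentiableAt ℝ μ t)
    (hKμ : ∀ t, 0 ≤ t → deriv μ t / μ t ≤ Kμ)
    (U V : ℝ → ℝ → X →L[ℝ] X) (P : ℝ → X →L[ℝ] X)
    (hU : IsEvolutionOperator U) (hP : IsProjectionValued P)
    (hC : CompatibleProjection U V P)
    (M ω α : ℝ) (hω : 0 < ω) (hα : 0 ≤ α) (hM : 1 ≤ M)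
    (hVQ : ∀ s t, 0 ≤ s → s < t →
      ‖(V s t).comp (1 - P t)‖ ≤ M * (deriv μ t / μ t) * (μ t / μ s) ^ ω * μ t ^ α)
    (γ ε : ℝ) (hγ : α < γ) (hε : 0 ≤ ε) :
    ∀ s t, 0 ≤ s → s ≤ t → t < s + 1 → ∀ x : X,
      ‖V s t ((1 - P t) x)‖ ≤
        M * Kμ * Real.exp (Kμ * (ω + γ + α)) *
          (μ t / μ s) ^ (-(γ + α)) * μ t ^ (ε + α) * ‖x‖ := by
  intro s t hs hst hts1 x
  have hK0 : 0 ≤ Kμ := Kmu_nonneg μ Kμ hgr hdiff hKμ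
  have hpos : ∀ u, 0 ≤ u → 0 < μ u := fun u hu => lt_of_lt_of_le one_pos (hgr.1 u hu)
  have hμs : 0 < μ s := hpos s hs
  have he_nonneg : (0:ℝ) ≤ ω + γ + α := by linarith
  -- the core estimate for s < u ≤ s + 1
  have hcore : ∀ u, s < u → u ≤ s + 1 →
      ‖(V s u).comp (1 - P u)‖ ≤ M * Kμ * Real.exp (Kμ * (ω + γ + α)) *
          (μ u / μ s) ^ (-(γ + α)) * μ u ^ (ε + α) := by
    intro u hsu hu1
    have hu0 : 0 ≤ u := hs.trans hsu.le
    have hμu : 0 < μ u := hpos u hu0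
    have hr1 : 1 ≤ μ u / μ s := (one_le_div hμs).2 (hgr.2.1 (Set.mem_Ici.2 hs) (Set.mem_Ici.2 hu0) hsu.le)
    have hr0 : 0 < μ u / μ s := lt_of_lt_of_le one_pos hr1
    have hrK : μ u / μ s ≤ Real.exp Kμ := by
      refine (mu_ratio_le μ Kμ hgr hdiff hKμ s u hs hsu.le).trans ?_
      exact Real.exp_le_exp.2 (by nlinarith)
    have h1 : (μ u / μ s) ^ ω * μ u ^ α ≤
        Real.exp (Kμ * (ω + γ + α)) * (μ u / μ s) ^ (-(γ + α)) * μ u ^ (ε + α) := by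
      have hsplit : (μ u / μ s) ^ ω =
          (μ u / μ s) ^ (ω + γ + α) * (μ u / μ s) ^ (-(γ + α)) := by
        rw [← Real.rpow_add hr0]; ring_nf
      have hb : (μ u / μ s) ^ (ω + γ + α) ≤ Real.exp (Kμ * (ω + γ + α)) := by
        rw [Real.exp_mul]
        exact Real.rpow_le_rpow hr0.le hrK he_nonneg
      have hm : μ u ^ α ≤ μ u ^ (ε + α) :=
        Real.rpow_le_rpow_of_exponent_le (hgr.1 u hu0) (by linarith)
      rw [hsplit]
      have hneg : (0:ℝ) ≤ (μ u / μ s) ^ (-(γ + α)) := Real.rpow_nonneg hr0.le _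
      exact mul_le_mul (mul_le_mul_of_nonneg_right hb hneg) hm
        (Real.rpow_nonneg hμu.le _) (by positivity)
    calc ‖(V s u).comp (1 - P u)‖
        ≤ M * (deriv μ u / μ u) * (μ u / μ s) ^ ω * μ u ^ α := hVQ s u hs hsu
      _ = (M * (deriv μ u / μ u)) * ((μ u / μ s) ^ ω * μ u ^ α) := by ring
      _ ≤ (M * Kμ) * (Real.exp (Kμ * (ω + γ + α)) * (μ u / μ s) ^ (-(γ + α)) * μ u ^ (ε + α)) := by
          apply mul_le_mul (mul_le_mul_of_nonneg_left (hKμ u hu0) (by linarith)) h1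
            (by positivity) (by positivity)
      _ = M * Kμ * Real.exp (Kμ * (ω + γ + α)) * (μ u / μ s) ^ (-(γ + α)) * μ u ^ (ε + α) := by
          ring
  rcases hst.lt_or_eq with hlt | heq
  · -- strict case
    calc ‖V s t ((1 - P t) x)‖ = ‖((V s t).comp (1 - P t)) x‖ := rfl
      _ ≤ ‖(V s t).comp (1 - P t)‖ * ‖x‖ := ContinuousLinearMap.le_opNorm _ _
      _ ≤ M * Kμ * Real.exp (Kμ * (ω + γ + α)) *
            (μ t / μ s) ^ (-(γ + α)) * μ t ^ (ε + α) * ‖x‖ :=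
          mul_le_mul_of_nonneg_right (hcore t hlt hts1.le) (norm_nonneg x)
  · -- the case t = s : limit argument
    subst heq
    -- V s s ((1 - P s) x) = (1 - P s) x
    have hVss : V s s ((1 - P s) x) = (1 - P s) x := by
      have h := hC.2.2.2 s s hs le_rfl x
      rw [hU.1 s hs] at h
      simpa using h
    rw [hVss]
    set l : Filter ℝ := nhdsWithin s (Set.Ioi s) with hl
    have hIoo : Set.Ioo s (s + 1) ∈ l := Ioo_mem_nhdsGT_of_mem ⟨le_refl s, by linarith⟩
    -- strong continuity facts
    have hUc : Tendsto (fun u => U u s ((1 - P s) x)) l (𝓝 ((1 - P s) x)) := by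
      have hcw := hU.2.2 ((1 - P s) x) (s, s) ⟨hs, le_rfl⟩
      have hmap : Tendsto (fun u : ℝ => (u, s)) l
          (nhdsWithin (s, s) {q : ℝ × ℝ | 0 ≤ q.2 ∧ q.2 ≤ q.1}) := by
        rw [tendsto_nhdsWithin_iff]
        constructor
        · exact (tendsto_id.mono_left nhdsWithin_le_nhds).prodMk_nhds tendsto_const_nhds
        · exact Filter.eventually_of_mem self_mem_nhdsWithin
            (fun u hu => ⟨hs, le_of_lt hu⟩)
      have := hcw.tendsto.comp hmap
      simp only [Function.comp_def] at this
      rw [hU.1 s hs] at this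
      simpa using this
    have hPc : Tendsto (fun u => (1 - P u) x) l (𝓝 ((1 - P s) x)) := by
      have := (hP.2 x s (Set.mem_Ici.2 hs)).tendsto
      have hmono : l ≤ nhdsWithin s (Set.Ici 0) :=
        nhdsWithin_mono s (fun u hu => hs.trans (le_of_lt hu))
      have hPt : Tendsto (fun u => P u x) l (𝓝 (P s x)) := this.mono_left hmono
      have : Tendsto (fun u => x - P u x) l (𝓝 (x - P s x)) := tendsto_const_nhds.sub hPt
      simpa using this
    have he0 : Tendsto (fun u => (1 - P u) x - U u s ((1 - P s) x)) l (𝓝 0) := by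
      simpa using hPc.sub hUc
    -- the key identity
    have hid : ∀ u, s < u →
        V s u ((1 - P u) x) - (1 - P s) x =
          ((V s u).comp (1 - P u)) ((1 - P u) x - U u s ((1 - P s) x)) := by
      intro u hsu
      have hu0 : 0 ≤ u := hs.trans hsu.le
      have hPP : ∀ z : X, P u (P u z) = P u z := fun z => by
        have := DFunLike.congr_fun (hP.1 u hu0) z
        simpa using this
      have hPPs : ∀ z : X, P s (P s z) = P s z := fun z => by
        have := DFunLike.congr_fun (hP.1 s hs) z
        simpa using this
      have hcomm : ∀ z : X, P u (U u s z) = U u s (P s z) := fun z => by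
        have := DFunLike.congr_fun (hC.1 s u hs hsu.le) z
        simpa using this
      have hq1 : (1 - P u) ((1 - P u) x) = (1 - P u) x := by
        simp only [ContinuousLinearMap.sub_apply, ContinuousLinearMap.one_apply,
          map_sub, hPP]
        abel
      have hq2 : (1 - P u) (U u s ((1 - P s) x)) = U u s ((1 - P s) x) := by
        simp only [ContinuousLinearMap.sub_apply, ContinuousLinearMap.one_apply]
        rw [hcomm]
        simp only [ContinuousLinearMap.sub_apply, ContinuousLinearMap.one_apply,
          map_sub, hPPs]
        simp
      have hV2 : V s u (U u s ((1 - P s) x)) = (1 - P s) x := hC.2.2.2 s u hs hsu.le x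
      calc V s u ((1 - P u) x) - (1 - P s) x
          = V s u ((1 - P u) x) - V s u (U u s ((1 - P s) x)) := by rw [hV2]
        _ = V s u ((1 - P u) x - U u s ((1 - P s) x)) := (map_sub _ _ _).symm
        _ = V s u ((1 - P u) ((1 - P u) x) - (1 - P u) (U u s ((1 - P s) x))) := by
            rw [hq1, hq2]
        _ = ((V s u).comp (1 - P u)) ((1 - P u) x - U u s ((1 - P s) x)) := by
            simp [ContinuousLinearMap.comp_apply, map_sub]
    -- uniform bound on the operator norm on (s, s+1)
    set C : ℝ := M * Kμ * Real.exp (Kμ * (ω + γ + α)) with hCdef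
    have hC0 : 0 ≤ C := by positivity
    set B : ℝ := C * μ (s + 1) ^ (ε + α) with hBdef
    have hBnd : ∀ u, u ∈ Set.Ioo s (s + 1) → ‖(V s u).comp (1 - P u)‖ ≤ B := by
      intro u hu
      obtain ⟨hsu, hu1⟩ := hu
      have hu0 : 0 ≤ u := hs.trans hsu.le
      refine (hcore u hsu hu1.le).trans ?_
      have hr1 : 1 ≤ μ u / μ s := (one_le_div hμs).2
        (hgr.2.1 (Set.mem_Ici.2 hs) (Set.mem_Ici.2 hu0) hsu.le)
      have h1 : (μ u / μ s) ^ (-(γ + α)) ≤ 1 :=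
        Real.rpow_le_one_of_one_le_of_nonpos hr1 (by linarith)
      have h2 : μ u ^ (ε + α) ≤ μ (s + 1) ^ (ε + α) :=
        Real.rpow_le_rpow (hpos u hu0).le
          (hgr.2.1 (Set.mem_Ici.2 hu0) (Set.mem_Ici.2 (by linarith)) hu1.le)
          (by linarith)
      calc C * (μ u / μ s) ^ (-(γ + α)) * μ u ^ (ε + α)
          ≤ C * 1 * μ (s + 1) ^ (ε + α) := by
            apply mul_le_mul (mul_le_mul_of_nonneg_left h1 hC0) h2
              (Real.rpow_nonneg (hpos u hu0).le _) (by positivity)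
        _ = B := by rw [hBdef]; ring
    -- convergence of V s u ((1 - P u) x) to (1 - P s) x
    have hF : Tendsto (fun u => V s u ((1 - P u) x)) l (𝓝 ((1 - P s) x)) := by
      rw [← tendsto_sub_nhds_zero_iff]
      apply squeeze_zero_norm' (a := fun u => B * ‖(1 - P u) x - U u s ((1 - P s) x)‖)
      · filter_upwards [hIoo] with u hu
        rw [hid u hu.1]
        calc ‖((V s u).comp (1 - P u)) ((1 - P u) x - U u s ((1 - P s) x))‖
            ≤ ‖(V s u).comp (1 - P u)‖ * ‖(1 - P u) x - U u s ((1 - P s) x)‖ :=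
              ContinuousLinearMap.le_opNorm _ _
          _ ≤ B * ‖(1 - P u) x - U u s ((1 - P s) x)‖ :=
              mul_le_mul_of_nonneg_right (hBnd u hu) (norm_nonneg _)
      · have := (he0.norm).const_mul B
        simpa using this
    -- convergence of the right-hand side
    have hμc : Tendsto μ l (𝓝 (μ s)) :=
      (hdiff s hs).continuousAt.tendsto.mono_left nhdsWithin_le_nhds
    have t1 : Tendsto (fun u => (μ u / μ s) ^ (-(γ + α))) l
        (𝓝 ((μ s / μ s) ^ (-(γ + α)))) :=
      (hμc.div_const (μ s)).rpow_const (Or.inl (by positivity))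
    have t2 : Tendsto (fun u => μ u ^ (ε + α)) l (𝓝 (μ s ^ (ε + α))) :=
      hμc.rpow_const (Or.inl hμs.ne')
    have h3 : Tendsto (fun u => C * (μ u / μ s) ^ (-(γ + α)) * μ u ^ (ε + α) * ‖x‖) l
        (𝓝 (C * (μ s / μ s) ^ (-(γ + α)) * μ s ^ (ε + α) * ‖x‖)) :=
      (((tendsto_const_nhds.mul t1).mul t2).mul tendsto_const_nhds)
    have h2ev : ∀ᶠ u in l, ‖V s u ((1 - P u) x)‖ ≤
        C * (μ u / μ s) ^ (-(γ + α)) * μ u ^ (ε + α) * ‖x‖ := by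
      filter_upwards [hIoo] with u hu
      calc ‖V s u ((1 - P u) x)‖ = ‖((V s u).comp (1 - P u)) x‖ := rfl
        _ ≤ ‖(V s u).comp (1 - P u)‖ * ‖x‖ := ContinuousLinearMap.le_opNorm _ _
        _ ≤ C * (μ u / μ s) ^ (-(γ + α)) * μ u ^ (ε + α) * ‖x‖ :=
            mul_le_mul_of_nonneg_right (hcore u hu.1 hu.2.le) (norm_nonneg x)
    exact le_of_tendsto_of_tendsto hF.norm h3 h2ev
end
end
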